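/- For the lazy simple random walk on a finite connected regular graph G, for every t, conditionally on the event that the cover time satisfies τ_cov ≤ t/3, the probability that some vertex w∈G has local time L_w(t) ≤ t/(2|G|) is at most |G|·exp( −(log 2/48)·t/t_hit(G) ). Equivalently, P[ ∃w∈G : L_w(t) ≤ t/(2|G|) | τ_cov ≤ t/3 ] ≤ |G|·exp( −(log 2/48)·t/t_hit(G) ). -/
import Mathlib


open Finset

noncomputable section

open scoped Classical

section MarkovDefs

variable {V : Type*} [Fintype V] [DecidableEq V] [Nonempty V]
variable {W : Type*} [Fintype W] [DecidableEq W] [Nonempty W]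

/-- `P` is a stochastic (transition) matrix. -/
def IsTransitionMatrix (P : Matrix V V ℝ) : Prop :=
  (∀ x y, 0 ≤ P x y) ∧ ∀ x, ∑ y, P x y = 1

/-- `π` is a (positive) stationary distribution for `P`. -/
def IsStationaryDist (P : Matrix V V ℝ) (π : V → ℝ) : Prop :=
  (∀ x, 0 < π x) ∧ (∑ x, π x = 1) ∧ ∀ y, ∑ x, π x * P x y = π y

/-- Reversibility (detailed balance) of `P` with respect to `π`. -/
def IsReversibleMC (P : Matrix V V ℝ) (π : V → ℝ) : Prop :=
  ∀ x y, π x * P x y = π y * P y x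

/-- Irreducibility of the chain `P`. -/
def IsIrreducibleMC (P : Matrix V V ℝ) : Prop :=
  ∀ x y, ∃ t : ℕ, 0 < (P ^ t) x y

/-- Aperiodicity of the chain `P`. -/
def IsAperiodicMC (P : Matrix V V ℝ) : Prop :=
  ∀ x : V, ∃ N : ℕ, ∀ n, N ≤ n → 0 < (P ^ n) x x

/-- The chain `P` is lazy. -/
def IsLazyMC (P : Matrix V V ℝ) : Prop := ∀ x, (1:ℝ)/2 ≤ P x x

/-- The uniform distribution on a finite type. -/
def unifDist (α : Type*) [Fintype α] : α → ℝ := fun _ => (Fintype.card α : ℝ)⁻¹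

/-- The second largest eigenvalue of a transition matrix: the supremum of the
eigenvalues different from `1`. -/
def secondEigenvalue (P : Matrix V V ℝ) : ℝ :=
  sSup {r : ℝ | r ≠ 1 ∧ ∃ φ : V → ℝ, φ ≠ 0 ∧ P.mulVec φ = r • φ}

/-- Relaxation time `1/(1-λ₂)`. -/
def relaxationTime (P : Matrix V V ℝ) : ℝ := 1 / (1 - secondEigenvalue P)

/-- Worst-case total variation distance from stationarity at time `t`. -/
def tvFromStat (P : Matrix V V ℝ) (π : V → ℝ) (t : ℕ) : ℝ :=
  ⨆ x : V, (1/2) * ∑ y, |(P ^ t) x y - π y|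

/-- The `ε`-mixing time (in total variation). -/
def mixingTime (P : Matrix V V ℝ) (π : V → ℝ) (ε : ℝ) : ℕ :=
  sInf {t : ℕ | tvFromStat P π t ≤ ε}

/-- Separation distance from initial state `x` at time `t`. -/
def sepDist (P : Matrix V V ℝ) (π : V → ℝ) (x : V) (t : ℕ) : ℝ :=
  ⨆ y : V, (1 - (P ^ t) x y / π y)

/-- Probability that the chain started at `x₀` follows the path `p`. -/
def pathWeight (P : Matrix V V ℝ) (x₀ : V) {t : ℕ} (p : Fin (t+1) → V) : ℝ :=
  (if p 0 = x₀ then (1:ℝ) else 0) * ∏ i : Fin t, P (p i.castSucc) (p i.succ)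

/-- `P_x[τ_y > t]`: the walk started at `x` avoids `y` up to time `t`. -/
def hitGT (P : Matrix V V ℝ) (x y : V) (t : ℕ) : ℝ :=
  ∑ p : Fin (t+1) → V, if ∀ i, p i ≠ y then pathWeight P x p else 0

/-- Expected hitting time `E_x[τ_y]`. -/
def expHit (P : Matrix V V ℝ) (x y : V) : ℝ := ∑' t : ℕ, hitGT P x y t

/-- Maximal expected hitting time `t_hit`. -/
def maxHitTime (P : Matrix V V ℝ) : ℝ := ⨆ x : V, ⨆ y : V, expHit P x y

/-- `P_x[τ_cov > t]`: the walk started at `x` has not visited every state by time `t`. -/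
def coverGT (P : Matrix V V ℝ) (x : V) (t : ℕ) : ℝ :=
  ∑ p : Fin (t+1) → V, if Function.Surjective p then 0 else pathWeight P x p

/-- Expected cover time `E_x[τ_cov]`. -/
def expCover (P : Matrix V V ℝ) (x : V) : ℝ := ∑' t : ℕ, coverGT P x t

/-- The cover time `t_cov`. -/
def coverTime (P : Matrix V V ℝ) : ℝ := ⨆ x : V, expCover P x

/-- `P_w[R(w) > t]`: tail of the first return time to `w`. -/
def returnGT (P : Matrix V V ℝ) (w : V) (t : ℕ) : ℝ :=
  ∑ p : Fin (t+1) → V, if ∀ i, i ≠ 0 → p i ≠ w then pathWeight P w p else 0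

/-- The degree of a vertex. -/
def graphDeg (G : SimpleGraph V) (x : V) : ℕ := (univ.filter fun y => G.Adj x y).card

/-- `G` is a regular graph. -/
def IsRegularGraph (G : SimpleGraph V) : Prop := ∃ d, ∀ x, graphDeg G x = d

/-- The lazy simple random walk on `G`. -/
def lazySRW (G : SimpleGraph V) : Matrix V V ℝ := fun x y =>
  if x = y then 1/2 else if G.Adj x y then 1 / (2 * (graphDeg G x : ℝ)) else 0

/-- The generalized lamplighter (wreath product) transition matrix on `(V → W) × V`:
move the lamplighter according to `P` and refresh the lamps at the departure and
arrival vertices independently according to `Q` (a double `Q`-update upon holding). -/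
def lamplighter (P : Matrix V V ℝ) (Q : Matrix W W ℝ) :
    Matrix ((V → W) × V) ((V → W) × V) ℝ := fun s s' =>
  if s.2 = s'.2 then
    if ∀ z, z ≠ s.2 → s.1 z = s'.1 z then P s.2 s'.2 * (Q * Q) (s.1 s.2) (s'.1 s.2) else 0
  else
    if ∀ z, z ≠ s.2 → z ≠ s'.2 → s.1 z = s'.1 z then
      P s.2 s'.2 * Q (s.1 s.2) (s'.1 s.2) * Q (s.1 s'.2) (s'.1 s'.2)
    else 0

/-- The product stationary distribution `π⋄((f,x)) = π_G(x) ∏_v π_H(f_v)`. -/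
def lampStat (πG : V → ℝ) (πH : W → ℝ) : ((V → W) × V) → ℝ :=
  fun s => πG s.2 * ∏ v, πH (s.1 v)

/-- The local time `L_v(t) = 2 Σ_{i≤t} 1(X_i = v) - δ_{X_0,v} - δ_{X_t,v}`, i.e. the
number of lamp-moves at `v` along the base path `p` up to time `t`. -/
def localTime {t : ℕ} (p : Fin (t+1) → V) (v : V) : ℕ :=
  2 * (univ.filter fun i => p i = v).card
    - (if p 0 = v then 1 else 0) - (if p (Fin.last t) = v then 1 else 0)

/-- Truncation (for `s ≤ t`) of a path to the time-interval `[0,s]`. -/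
def truncPath {t : ℕ} (p : Fin (t+1) → V) (s : ℕ) : Fin (s+1) → V :=
  fun i => p ⟨min (i : ℕ) t, Nat.lt_succ_of_le (Nat.min_le_right _ _)⟩

/-- Extension of a finite path to all times (constant after time `n`). -/
def extendPath {n : ℕ} (z : Fin (n+1) → W) : ℕ → W :=
  fun i => z ⟨min i n, Nat.lt_succ_of_le (Nat.min_le_right _ _)⟩

/-- The history (list of states) of the trajectory `z` up to time `k`. -/
def ruleHist (z : ℕ → W) (k : ℕ) : List W := List.ofFn fun i : Fin (k+1) => z (i : ℕ)

/-- A randomized stopping rule: `r h` is the conditional probability of stopping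
right now given that the history so far is `h` and we have not yet stopped. -/
def IsStoppingRule (r : List W → ℝ) : Prop := ∀ h, 0 ≤ r h ∧ r h ≤ 1

/-- `P[τ ≤ m | trajectory z]` for the stopping rule `r`. -/
def stopBy (r : List W → ℝ) (z : ℕ → W) (m : ℕ) : ℝ :=
  1 - ∏ k ∈ Finset.range (m+1), (1 - r (ruleHist z k))

/-- `P[τ < m | trajectory z]` for the stopping rule `r`. -/
def stopLT (r : List W → ℝ) (z : ℕ → W) (m : ℕ) : ℝ :=
  1 - ∏ k ∈ Finset.range m, (1 - r (ruleHist z k))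

/-- `P_{w₀}[X_t = y, τ = t]` for the chain `Q` and the stopping rule `r`. -/
def stopAtProb (Q : Matrix W W ℝ) (r : List W → ℝ) (w₀ : W) (t : ℕ) (y : W) : ℝ :=
  ∑ z : Fin (t+1) → W,
    if z (Fin.last t) = y then
      pathWeight Q w₀ z * (∏ k ∈ Finset.range t, (1 - r (ruleHist (extendPath z) k))) *
        r (ruleHist (extendPath z) t)
    else 0

/-- `P_{w₀}[X_t = y, τ > t]` for the chain `Q` and the stopping rule `r`. -/
def notStopProbAt (Q : Matrix W W ℝ) (r : List W → ℝ) (w₀ : W) (t : ℕ) (y : W) : ℝ :=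
  ∑ z : Fin (t+1) → W,
    if z (Fin.last t) = y then
      pathWeight Q w₀ z * ∏ k ∈ Finset.range (t+1), (1 - r (ruleHist (extendPath z) k))
    else 0

/-- `r` is (the stopping rule of) a strong stationary time for `(Q, π)`. -/
def IsSST (Q : Matrix W W ℝ) (π : W → ℝ) (r : List W → ℝ) : Prop :=
  IsStoppingRule r ∧ ∀ w₀ t y, stopAtProb Q r w₀ t y = π y * ∑ y', stopAtProb Q r w₀ t y'

/-- `h` is a halting state for the stopping rule `r` and initial state `w₀`:
being at `h` at time `t` implies having stopped. -/
def IsHaltingState (Q : Matrix W W ℝ) (r : List W → ℝ) (w₀ h : W) : Prop :=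
  ∀ t, notStopProbAt Q r w₀ t h = 0

/-- A separation-optimal strong stationary time: its tail equals the separation
distance for every starting state. -/
def IsSepOptimal (Q : Matrix W W ℝ) (π : W → ℝ) (r : List W → ℝ) : Prop :=
  ∀ w₀ t, sepDist Q π w₀ t = ∑ y, notStopProbAt Q r w₀ t y

/-! Joint description of the generalized lamplighter chain: a base path `p` on `V`
together with independent `Q`-trajectories `z v` on each lamp coordinate `v`; the lamp
configuration at time `s` reads off each `z v` at the local time `L_v(s)`. -/

/-- Weight of a joint configuration (base path, lamp trajectories). -/
def jointWeight (P : Matrix V V ℝ) (Q : Matrix W W ℝ) (f₀ : V → W) (x₀ : V) {t : ℕ}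
    (p : Fin (t+1) → V) (z : V → (Fin (2*t+1) → W)) : ℝ :=
  pathWeight P x₀ p * ∏ v, pathWeight Q (f₀ v) (z v)

/-- The lamp configuration at time `s` along the joint path: `F_s(v) = Z_v(L_v(s))`. -/
def lampAt {t : ℕ} (p : Fin (t+1) → V) (z : V → (Fin (2*t+1) → W)) (s : ℕ) (v : V) : W :=
  z v ⟨min (localTime (truncPath p s) v) (2*t), Nat.lt_succ_of_le (Nat.min_le_right _ _)⟩

/-- `P_{(f₀,x₀)}[X⋄_t = (f,x), τ⋄ ≤ s]`, where
`τ⋄ = inf{u : ∀ v, τ_H(v) ≤ L_v(u)}` is built from conditionally independent copies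
`τ_H(v)` (with stopping rule `r`) on the lamp coordinates. -/
def tauDmdLEProb (P : Matrix V V ℝ) (Q : Matrix W W ℝ) (r : List W → ℝ)
    (f₀ : V → W) (x₀ : V) (t s : ℕ) (f : V → W) (x : V) : ℝ :=
  ∑ p : Fin (t+1) → V, ∑ z : V → (Fin (2*t+1) → W),
    if p (Fin.last t) = x ∧ ∀ v, lampAt p z t v = f v then
      jointWeight P Q f₀ x₀ p z *
        ∏ v, stopBy r (extendPath (z v)) (localTime (truncPath p s) v)
    else 0

/-- `P_{(f₀,x₀)}[X⋄_t = (f,x), τ⋄ = t]`. -/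
def tauDmdEqProb (P : Matrix V V ℝ) (Q : Matrix W W ℝ) (r : List W → ℝ)
    (f₀ : V → W) (x₀ : V) (t : ℕ) (f : V → W) (x : V) : ℝ :=
  tauDmdLEProb P Q r f₀ x₀ t t f x -
    if t = 0 then 0 else tauDmdLEProb P Q r f₀ x₀ t (t-1) f x

/-- `P_{(f₀,x₀)}[X_t = x, τ⋄ ≤ s]` (base-walk marginal). -/
def tauDmdLEBase (P : Matrix V V ℝ) (Q : Matrix W W ℝ) (r : List W → ℝ)
    (f₀ : V → W) (x₀ : V) (t s : ℕ) (x : V) : ℝ :=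
  ∑ p : Fin (t+1) → V, ∑ z : V → (Fin (2*t+1) → W),
    if p (Fin.last t) = x then
      jointWeight P Q f₀ x₀ p z *
        ∏ v, stopBy r (extendPath (z v)) (localTime (truncPath p s) v)
    else 0

/-- `P_{(f₀,x₀)}[X_t = x, τ⋄ = t]` (base-walk marginal). -/
def tauDmdEqBase (P : Matrix V V ℝ) (Q : Matrix W W ℝ) (r : List W → ℝ)
    (f₀ : V → W) (x₀ : V) (t : ℕ) (x : V) : ℝ :=
  tauDmdLEBase P Q r f₀ x₀ t t x -
    if t = 0 then 0 else tauDmdLEBase P Q r f₀ x₀ t (t-1) x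

/-- `P_{(f₀,x₀)}[τ⋄ > t]`. -/
def tauDmdGTProb (P : Matrix V V ℝ) (Q : Matrix W W ℝ) (r : List W → ℝ)
    (f₀ : V → W) (x₀ : V) (t : ℕ) : ℝ :=
  ∑ p : Fin (t+1) → V, ∑ z : V → (Fin (2*t+1) → W),
    jointWeight P Q f₀ x₀ p z * (1 - ∏ v, stopBy r (extendPath (z v)) (localTime p v))

/-- `P_{(f₀,x₀)}[X⋄_t = (f,x), τ⋄ > t]`. -/
def tauDmdGTProbAt (P : Matrix V V ℝ) (Q : Matrix W W ℝ) (r : List W → ℝ)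
    (f₀ : V → W) (x₀ : V) (t : ℕ) (f : V → W) (x : V) : ℝ :=
  ∑ p : Fin (t+1) → V, ∑ z : V → (Fin (2*t+1) → W),
    if p (Fin.last t) = x ∧ ∀ v, lampAt p z t v = f v then
      jointWeight P Q f₀ x₀ p z * (1 - ∏ v, stopBy r (extendPath (z v)) (localTime p v))
    else 0

/-- `P_{(g,y)}[X⋄_m = (f,x), τ_G = m]`, where the stopping rule `rG` acts on the
base path of the lamplighter chain. -/
def baseStopProb (P : Matrix V V ℝ) (Q : Matrix W W ℝ) (rG : List V → ℝ)
    (g : V → W) (y : V) (m : ℕ) (f : V → W) (x : V) : ℝ :=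
  ∑ p : Fin (m+1) → V, ∑ z : V → (Fin (2*m+1) → W),
    if p (Fin.last m) = x ∧ ∀ v, lampAt p z m v = f v then
      jointWeight P Q g y p z *
        (∏ k ∈ Finset.range m, (1 - rG (ruleHist (extendPath p) k))) *
        rG (ruleHist (extendPath p) m)
    else 0

/-- `P_{(f₀,x₀)}[X⋄_t = (f,x), τ⋄₂ = t]` for `τ⋄₂ = τ⋄ + τ_G(X_{τ⋄})`, where after
`τ⋄` the chain is restarted and run independently of the past. -/
def tauDmd2EqProb (P : Matrix V V ℝ) (Q : Matrix W W ℝ) (r : List W → ℝ) (rG : List V → ℝ)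
    (f₀ : V → W) (x₀ : V) (t : ℕ) (f : V → W) (x : V) : ℝ :=
  ∑ s ∈ Finset.range (t+1), ∑ g : V → W, ∑ y : V,
    tauDmdEqProb P Q r f₀ x₀ s g y * baseStopProb P Q rG g y (t - s) f x

/-- `P_x[τ > t]` for a stopping rule on the chain `P`. -/
def stopGTProb (P : Matrix V V ℝ) (r : List V → ℝ) (x : V) (t : ℕ) : ℝ :=
  ∑ y, notStopProbAt P r x t y

/-- `E_x[τ]` for a stopping rule on the chain `P`. -/
def expStopTime (P : Matrix V V ℝ) (r : List V → ℝ) (x : V) : ℝ :=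
  ∑' t : ℕ, stopGTProb P r x t

/-- `P_x[X_τ = y]` for a stopping rule on the chain `P`. -/
def stopRuleDist (P : Matrix V V ℝ) (r : List V → ℝ) (x : V) (y : V) : ℝ :=
  ∑' t : ℕ, stopAtProb P r x t y

/-- `t_stop`: the worst-case over starting states of the optimal expected duration of a
(randomized) stopping rule whose stopping distribution is the stationary one
(Lovász–Winkler). -/
def tStop (P : Matrix V V ℝ) (π : V → ℝ) : ℝ :=
  ⨆ x : V, sInf {e : ℝ | ∃ r : List V → ℝ, IsStoppingRule r ∧
    (∀ y, stopRuleDist P r x y = π y) ∧ expStopTime P r x = e}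

/-- The path `p` visits every vertex by time `t/3`. -/
def coveredByThird {t : ℕ} (p : Fin (t+1) → V) : Prop :=
  ∀ v : V, ∃ i : Fin (t+1), (i : ℝ) ≤ (t : ℝ) / 3 ∧ p i = v

end MarkovDefs

set_option linter.unusedSectionVars false

section Aux
variable {V : Type*} [Fintype V] [DecidableEq V] [Nonempty V]

lemma pathWeight_nonneg (P : Matrix V V ℝ) (hP : ∀ a b, 0 ≤ P a b) (x : V) {t : ℕ}
    (p : Fin (t+1) → V) : 0 ≤ pathWeight P x p := by
  unfold pathWeight
  apply mul_nonneg
  · split <;> norm_num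
  · exact Finset.prod_nonneg fun i _ => hP _ _

lemma pathWeight_cons (P : Matrix V V ℝ) (x a : V) {t : ℕ} (q : Fin (t+1) → V) :
    pathWeight P x (Fin.cons a q) = (if a = x then (1:ℝ) else 0) *
      (P a (q 0) * pathWeight P (q 0) q) := by
  unfold pathWeight
  rw [Fin.prod_univ_succ]
  have h1 : ∀ i : Fin t,
      Fin.cons (α := fun _ => V) a q i.succ.castSucc = q i.castSucc := by
    intro i
    rw [← Fin.succ_castSucc, Fin.cons_succ]
  have h2 : Fin.cons (α := fun _ => V) a q ((0:Fin (t+1)).castSucc) = a := by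
    have : ((0:Fin (t+1)).castSucc) = (0 : Fin (t+2)) := rfl
    rw [this, Fin.cons_zero]
  simp only [Fin.cons_zero, Fin.cons_succ, if_pos rfl, one_mul, h1, h2]
  simp [mul_assoc, mul_comm, mul_left_comm]

lemma consSplit (P : Matrix V V ℝ) (x : V) {t : ℕ} (B : (Fin (t+2) → V) → ℝ) :
    ∑ p : Fin (t+2) → V, pathWeight P x p * B p
      = ∑ q : Fin (t+1) → V, P x (q 0) * (pathWeight P (q 0) q * B (Fin.cons x q)) := by
  rw [← Equiv.sum_comp (Fin.consEquiv (fun _ => V)) (fun p => pathWeight P x p * B p),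
    Fintype.sum_prod_type]
  have he : ∀ (a : V) (q : Fin (t+1) → V), (Fin.consEquiv (fun _ => V)) (a, q) = Fin.cons a q :=
    fun _ _ => rfl
  simp only [he, pathWeight_cons]
  rw [Finset.sum_comm]
  congr 1
  ext q
  rw [Finset.sum_eq_single x]
  · simp [mul_assoc]
  · intro b _ hb
    simp [hb]
  · simp

lemma pathWeight_snoc (P : Matrix V V ℝ) (x a : V) {t : ℕ} (q : Fin (t+1) → V) :
    pathWeight P x (Fin.snoc q a) = pathWeight P x q * P (q (Fin.last t)) a := by
  unfold pathWeight
  rw [Fin.prod_univ_castSucc]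
  have h0 : Fin.snoc (α := fun _ => V) q a (0 : Fin (t+2)) = q 0 := by
    have : (0 : Fin (t+2)) = Fin.castSucc (0 : Fin (t+1)) := rfl
    rw [this, Fin.snoc_castSucc]
  have h1 : ∀ i : Fin t, Fin.snoc (α := fun _ => V) q a (i.castSucc.castSucc) = q i.castSucc := by
    intro i; rw [Fin.snoc_castSucc]
  have h2 : ∀ i : Fin t, Fin.snoc (α := fun _ => V) q a (i.castSucc.succ) = q i.succ := by
    intro i; rw [Fin.succ_castSucc, Fin.snoc_castSucc]
  have h3 : Fin.snoc (α := fun _ => V) q a ((Fin.last t).castSucc) = q (Fin.last t) := by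
    rw [Fin.snoc_castSucc]
  have h4 : Fin.snoc (α := fun _ => V) q a ((Fin.last t).succ) = a := by
    rw [Fin.succ_last, Fin.snoc_last]
  simp only [h0, h1, h2, h3, h4]
  ring

lemma snocSplit (P : Matrix V V ℝ) (x : V) {t : ℕ} (B : (Fin (t+2) → V) → ℝ) :
    ∑ p : Fin (t+2) → V, pathWeight P x p * B p
      = ∑ q : Fin (t+1) → V, pathWeight P x q *
          ∑ a : V, P (q (Fin.last t)) a * B (Fin.snoc q a) := by
  rw [← Equiv.sum_comp (Fin.snocEquiv (fun _ => V)) (fun p => pathWeight P x p * B p),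
    Fintype.sum_prod_type]
  rw [Finset.sum_comm]
  congr 1
  ext q
  rw [Finset.mul_sum]
  congr 1
  ext a
  have he : (Fin.snocEquiv (fun _ => V)) (a, q) = Fin.snoc q a := rfl
  rw [he, pathWeight_snoc]
  ring

end Aux
section Aux2
variable {V : Type*} [Fintype V] [DecidableEq V] [Nonempty V]

/-- Sum over paths of length `T` started at `y` of `pathWeight * B`. -/
def pansum (P : Matrix V V ℝ) (y : V) (T : ℕ) (B : (Fin (T+1) → V) → ℝ) : ℝ :=
  ∑ r : Fin (T+1) → V, pathWeight P y r * B r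

lemma sum_fn_fin_one (f : (Fin 1 → V) → ℝ) :
    ∑ r : Fin 1 → V, f r = ∑ v : V, f (fun _ => v) := by
  rw [← Equiv.sum_comp (Equiv.funUnique (Fin 1) V).symm f]
  rfl

lemma pathWeight_fin_zero (P : Matrix V V ℝ) (x : V) (r : Fin 1 → V) :
    pathWeight P x r = if r 0 = x then (1:ℝ) else 0 := by
  unfold pathWeight
  simp

lemma snoc_of_lt {k : ℕ} (q : Fin (k+1) → V) (a : V) (i : Fin (k+2)) (h : (i:ℕ) < k+1) :
    Fin.snoc (α := fun _ => V) q a i = q ⟨i, h⟩ := by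
  simp only [Fin.snoc, h, dif_pos]
  rfl

lemma pansum_zero (P : Matrix V V ℝ) (y : V) (B : (Fin 1 → V) → ℝ) :
    pansum P y 0 B = B (fun _ => y) := by
  unfold pansum
  rw [sum_fn_fin_one (fun r => pathWeight P y r * B r)]
  simp only [pathWeight_fin_zero]
  rw [Finset.sum_eq_single y] <;> simp +contextual

lemma pansum_succ (P : Matrix V V ℝ) (y : V) (T : ℕ) (B : (Fin (T+2) → V) → ℝ) :
    pansum P y (T+1) B
      = pansum P y T (fun r => ∑ a : V, P (r (Fin.last T)) a * B (Fin.snoc r a)) :=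
  snocSplit P y B

lemma pansum_cons (P : Matrix V V ℝ) (y : V) (T : ℕ) (B : (Fin (T+2) → V) → ℝ) :
    pansum P y (T+1) B
      = ∑ z : V, P y z * pansum P z T (fun r => B (Fin.cons y r)) := by
  unfold pansum
  rw [consSplit P y B]
  have h1 : ∀ z : V, P y z * ∑ r : Fin (T+1) → V, pathWeight P z r * B (Fin.cons y r)
      = ∑ r : Fin (T+1) → V, P y z * (pathWeight P z r * B (Fin.cons y r)) :=
    fun z => Finset.mul_sum _ _ _
  simp only [h1]
  rw [Finset.sum_comm]
  congr 1; ext q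
  rw [Finset.sum_eq_single (q 0)]
  · intro z _ hz
    unfold pathWeight
    rw [if_neg (fun h => hz h.symm)]
    simp
  · intro hq
    exact absurd (Finset.mem_univ _) hq

lemma pansum_nonneg (P : Matrix V V ℝ) (hP : ∀ a b, 0 ≤ P a b) (y : V) (T : ℕ)
    {B : (Fin (T+1) → V) → ℝ} (hB : ∀ r, 0 ≤ B r) : 0 ≤ pansum P y T B :=
  Finset.sum_nonneg fun r _ => mul_nonneg (pathWeight_nonneg P hP y r) (hB r)

lemma pansum_mono (P : Matrix V V ℝ) (hP : ∀ a b, 0 ≤ P a b) (y : V) (T : ℕ)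
    {B B' : (Fin (T+1) → V) → ℝ} (h : ∀ r, B r ≤ B' r) :
    pansum P y T B ≤ pansum P y T B' :=
  Finset.sum_le_sum fun r _ =>
    mul_le_mul_of_nonneg_left (h r) (pathWeight_nonneg P hP y r)

lemma pansum_one (P : Matrix V V ℝ) (hrow : ∀ x, ∑ z, P x z = 1) (y : V) (T : ℕ) :
    pansum P y T (fun _ => 1) = 1 := by
  induction T generalizing y with
  | zero => rw [pansum_zero]
  | succ T ih =>
      rw [pansum_succ]
      have : (fun r : Fin (T+1) → V => ∑ a : V, P (r (Fin.last T)) a * (1:ℝ))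
          = fun _ => (1:ℝ) := by
        ext r
        simp only [mul_one]
        exact hrow _
      rw [this, ih]

/-- First `s+1` coordinates of a path of length `s+T`. -/
def firstPart {V : Type*} {s T : ℕ} (p : Fin (s+T+1) → V) : Fin (s+1) → V :=
  fun j => p (Fin.castLE (by omega) j)

/-- Coordinates `s, s+1, …, s+T` of a path of length `s+T`. -/
def lastPart {V : Type*} {s T : ℕ} (p : Fin (s+T+1) → V) : Fin (T+1) → V :=
  fun i => p ⟨s + i, by omega⟩

lemma timeSplit (P : Matrix V V ℝ) (s : ℕ) :
    ∀ (T : ℕ) (x : V) (A : (Fin (s+1) → V) → ℝ) (B : (Fin (T+1) → V) → ℝ),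
    ∑ p : Fin (s+T+1) → V, pathWeight P x p * (A (firstPart p) * B (lastPart p))
      = ∑ q : Fin (s+1) → V, pathWeight P x q * A q * pansum P (q (Fin.last s)) T B := by
  intro T
  induction T with
  | zero =>
      intro x A B
      have h1 : ∀ p : Fin (s+0+1) → V, firstPart p = p :=
        fun p => funext fun j => congrArg p (Fin.ext rfl)
      have h2 : ∀ p : Fin (s+0+1) → V, lastPart (s := s) (T := 0) p
          = fun _ => p (Fin.last s) := by
        intro p
        funext i
        have hi : i = 0 := Fin.ext (by omega)
        subst hi
        exact congrArg p (Fin.ext rfl)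
      simp only [h1, h2, pansum_zero]
      congr 1; ext p; ring
  | succ T ih =>
      intro x A B
      have key := snocSplit P x
        (t := s + T)
        (fun p => A (firstPart (s := s) (T := T+1) p) * B (lastPart (s := s) (T := T+1) p))
      have f1 : ∀ (q' : Fin (s+T+1) → V) (a : V),
          firstPart (s := s) (T := T+1) (Fin.snoc q' a) = firstPart (s := s) (T := T) q' := by
        intro q' a
        funext j
        simp only [firstPart]
        rw [snoc_of_lt (h := by simp only [Fin.coe_castLE]; omega)]
        exact congrArg q' (Fin.ext rfl)
      have f2 : ∀ (q' : Fin (s+T+1) → V) (a : V),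
          lastPart (s := s) (T := T+1) (Fin.snoc q' a)
            = Fin.snoc (lastPart (s := s) (T := T) q') a := by
        intro q' a
        funext i
        simp only [lastPart]
        rcases Nat.lt_or_ge (i : ℕ) (T+1) with h | h
        · rw [snoc_of_lt (h := by show s + (i:ℕ) < s+T+1; omega),
            snoc_of_lt (q := lastPart (s := s) (T := T) q') (i := i) (h := h)]
          simp only [lastPart]
        · have hi : i = Fin.last (T+1) := Fin.ext (by
            simp only [Fin.val_last]
            have := i.isLt
            omega)
          subst hi
          rw [Fin.snoc_last]
          simp only [Fin.snoc, Fin.val_last]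
          rw [dif_neg (by omega)]
          simp
      have f3 : ∀ q' : Fin (s+T+1) → V,
          (lastPart (s := s) (T := T) q') (Fin.last T) = q' (Fin.last (s+T)) :=
        fun q' => congrArg q' (Fin.ext rfl)
      calc ∑ p : Fin (s+(T+1)+1) → V,
            pathWeight P x p * (A (firstPart p) * B (lastPart p))
          = ∑ q' : Fin (s+T+1) → V, pathWeight P x q' *
              (A (firstPart q') *
                ∑ a : V, P ((lastPart (s := s) (T := T) q') (Fin.last T)) a
                  * B (Fin.snoc (lastPart (s := s) (T := T) q') a)) := by
            refine key.trans ?_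
            apply Finset.sum_congr rfl
            intro q' _
            simp only [f1, f2]
            rw [f3]
            simp only [Finset.mul_sum]
            exact Finset.sum_congr rfl fun a _ => by ring
        _ = ∑ q : Fin (s+1) → V, pathWeight P x q * A q *
              pansum P (q (Fin.last s)) T
                (fun r => ∑ a : V, P (r (Fin.last T)) a * B (Fin.snoc r a)) :=
            ih x A (fun r => ∑ a : V, P (r (Fin.last T)) a * B (Fin.snoc r a))
        _ = _ := by
            apply Finset.sum_congr rfl
            intro q _
            rw [← pansum_succ]

end Aux2
section Aux3
variable {V : Type*} [Fintype V] [DecidableEq V] [Nonempty V]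

/-- Indicator of avoiding `w`. -/
def avoidInd (w : V) {T : ℕ} : (Fin (T+1) → V) → ℝ :=
  fun r => if ∀ i, r i ≠ w then 1 else 0

lemma avoidInd_nonneg (w : V) {T : ℕ} (r : Fin (T+1) → V) : 0 ≤ avoidInd w r := by
  unfold avoidInd; split <;> norm_num

lemma avoidInd_le_one (w : V) {T : ℕ} (r : Fin (T+1) → V) : avoidInd w r ≤ 1 := by
  unfold avoidInd; split <;> norm_num

lemma hitGT_eq_pansum (P : Matrix V V ℝ) (x w : V) (T : ℕ) :
    hitGT P x w T = pansum P x T (avoidInd w) := by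
  unfold hitGT pansum avoidInd
  apply Finset.sum_congr rfl
  intro p _
  split <;> simp

lemma hitGT_zero (P : Matrix V V ℝ) (x w : V) :
    hitGT P x w 0 = if x = w then 0 else 1 := by
  rw [hitGT_eq_pansum, pansum_zero]
  unfold avoidInd
  by_cases h : x = w
  · rw [if_neg, if_pos h]
    push_neg
    exact ⟨0, h⟩
  · rw [if_pos fun _ => h, if_neg h]

lemma avoid_cons (w x : V) {T : ℕ} (r : Fin (T+1) → V) :
    avoidInd w (Fin.cons x r) = (if x = w then 0 else 1) * avoidInd w r := by
  unfold avoidInd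
  have : (∀ i, Fin.cons (α := fun _ => V) x r i ≠ w) ↔ (x ≠ w ∧ ∀ i, r i ≠ w) := by
    constructor
    · intro h
      exact ⟨by simpa using h 0, fun i => by simpa using h i.succ⟩
    · intro ⟨h1, h2⟩ i
      refine Fin.cases ?_ ?_ i
      · simpa using h1
      · intro j; simpa using h2 j
  rw [if_congr this rfl rfl]
  by_cases h : x = w
  · simp [h]
  · by_cases h2 : ∀ i, r i ≠ w <;> simp [h, h2]

lemma pansum_const_mul (P : Matrix V V ℝ) (y : V) (T : ℕ) (c : ℝ)
    (B : (Fin (T+1) → V) → ℝ) :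
    pansum P y T (fun r => c * B r) = c * pansum P y T B := by
  unfold pansum
  rw [Finset.mul_sum]
  exact Finset.sum_congr rfl fun r _ => by ring

lemma hitGT_succ (P : Matrix V V ℝ) (x w : V) (T : ℕ) :
    hitGT P x w (T+1) = if x = w then 0 else ∑ z, P x z * hitGT P z w T := by
  rw [hitGT_eq_pansum, pansum_cons]
  have : ∀ z : V, pansum P z T (fun r => avoidInd w (Fin.cons x r))
      = (if x = w then 0 else 1) * pansum P z T (avoidInd w) := by
    intro z
    rw [← pansum_const_mul]
    apply Finset.sum_congr rfl
    intro r _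
    simp only [avoid_cons]
  simp only [this]
  by_cases h : x = w
  · simp [h]
  · simp only [if_neg h, one_mul, hitGT_eq_pansum]

lemma hitGT_nonneg (P : Matrix V V ℝ) (hP : ∀ a b, 0 ≤ P a b) (x w : V) (T : ℕ) :
    0 ≤ hitGT P x w T := by
  rw [hitGT_eq_pansum]
  exact pansum_nonneg P hP x T (avoidInd_nonneg w)

lemma hitGT_le_one (P : Matrix V V ℝ) (hP : ∀ a b, 0 ≤ P a b)
    (hrow : ∀ x, ∑ z, P x z = 1) (x w : V) (T : ℕ) :
    hitGT P x w T ≤ 1 := by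
  rw [hitGT_eq_pansum]
  calc pansum P x T (avoidInd w) ≤ pansum P x T (fun _ => 1) :=
        pansum_mono P hP x T (avoidInd_le_one w)
    _ = 1 := pansum_one P hrow x T

lemma hitGT_antitone (P : Matrix V V ℝ) (hP : ∀ a b, 0 ≤ P a b)
    (hrow : ∀ x, ∑ z, P x z = 1) (w : V) (T : ℕ) :
    ∀ x, hitGT P x w (T+1) ≤ hitGT P x w T := by
  induction T with
  | zero =>
      intro x
      rw [hitGT_succ, hitGT_zero]
      by_cases h : x = w
      · simp [h]
      · simp only [if_neg h]
        calc ∑ z, P x z * hitGT P z w 0 ≤ ∑ z, P x z * 1 := by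
              apply Finset.sum_le_sum
              intro z _
              exact mul_le_mul_of_nonneg_left (hitGT_le_one P hP hrow z w 0) (hP x z)
          _ = 1 := by simp only [mul_one]; exact hrow x
  | succ T ih =>
      intro x
      rw [hitGT_succ, hitGT_succ]
      by_cases h : x = w
      · simp [h]
      · simp only [if_neg h]
        apply Finset.sum_le_sum
        intro z _
        exact mul_le_mul_of_nonneg_left (ih z) (hP x z)

lemma hitGT_le_of_le (P : Matrix V V ℝ) (hP : ∀ a b, 0 ≤ P a b)
    (hrow : ∀ x, ∑ z, P x z = 1) (w x : V) {a b : ℕ} (h : a ≤ b) :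
    hitGT P x w b ≤ hitGT P x w a := by
  induction b with
  | zero => cases Nat.le_zero.mp h; exact le_refl _
  | succ b ih =>
      rcases Nat.lt_or_ge a (b+1) with h2 | h2
      · exact le_trans (hitGT_antitone P hP hrow w b x) (ih (by omega))
      · have : a = b + 1 := by omega
        subst this
        exact le_refl _

/-- The worst-case avoidance probability. -/
def Lam (P : Matrix V V ℝ) (w : V) (k : ℕ) : ℝ :=
  Finset.univ.sup' Finset.univ_nonempty (fun x : V => hitGT P x w k)

lemma hitGT_le_Lam (P : Matrix V V ℝ) (w x : V) (k : ℕ) :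
    hitGT P x w k ≤ Lam P w k := by
  unfold Lam
  exact Finset.le_sup' (fun x => hitGT P x w k) (Finset.mem_univ x)

lemma Lam_nonneg (P : Matrix V V ℝ) (hP : ∀ a b, 0 ≤ P a b) (w : V) (k : ℕ) :
    0 ≤ Lam P w k := by
  obtain ⟨x⟩ := (inferInstance : Nonempty V)
  exact le_trans (hitGT_nonneg P hP x w k) (hitGT_le_Lam P w x k)

lemma Lam_le_one (P : Matrix V V ℝ) (hP : ∀ a b, 0 ≤ P a b)
    (hrow : ∀ x, ∑ z, P x z = 1) (w : V) (k : ℕ) : Lam P w k ≤ 1 :=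
  Finset.sup'_le _ _ fun x _ => hitGT_le_one P hP hrow x w k

lemma Lam_antitone (P : Matrix V V ℝ) (hP : ∀ a b, 0 ≤ P a b)
    (hrow : ∀ x, ∑ z, P x z = 1) (w : V) {a b : ℕ} (h : a ≤ b) :
    Lam P w b ≤ Lam P w a :=
  Finset.sup'_le _ _ fun x _ =>
    le_trans (hitGT_le_of_le P hP hrow w x h) (hitGT_le_Lam P w x a)

lemma avoid_split (w : V) {s T : ℕ} (p : Fin (s+T+1) → V) :
    avoidInd w p = avoidInd w (firstPart p) * avoidInd w (lastPart p) := by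
  unfold avoidInd
  have hiff : (∀ i, p i ≠ w)
      ↔ ((∀ j, firstPart p j ≠ w) ∧ (∀ j, lastPart p j ≠ w)) := by
    constructor
    · intro h
      exact ⟨fun j => h _, fun j => h _⟩
    · intro ⟨h1, h2⟩ i
      rcases Nat.lt_or_ge (i : ℕ) (s+1) with hc | hc
      · have := h1 ⟨i, hc⟩
        have he : firstPart p ⟨(i:ℕ), hc⟩ = p i := congrArg p (Fin.ext rfl)
        rwa [he] at this
      · have hlt : (i:ℕ) - s < T + 1 := by have := i.isLt; omega
        have := h2 ⟨(i:ℕ) - s, hlt⟩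
        have he : lastPart p ⟨(i:ℕ) - s, hlt⟩ = p i := by
          apply congrArg p
          apply Fin.ext
          show s + ((i:ℕ) - s) = (i:ℕ)
          omega
        rwa [he] at this
  rw [if_congr hiff rfl rfl]
  by_cases h1 : ∀ j, firstPart p j ≠ w <;> by_cases h2 : ∀ j, lastPart p j ≠ w <;>
    simp [h1, h2]

lemma hitGT_split_le (P : Matrix V V ℝ) (hP : ∀ a b, 0 ≤ P a b)
    (w x : V) (s T : ℕ) :
    hitGT P x w (s+T) ≤ hitGT P x w s * Lam P w T := by
  rw [hitGT_eq_pansum]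
  unfold pansum
  have : ∀ p : Fin (s+T+1) → V,
      pathWeight P x p * avoidInd w p
        = pathWeight P x p * (avoidInd w (firstPart p) * avoidInd w (lastPart p)) := by
    intro p; rw [← avoid_split]
  rw [Finset.sum_congr rfl fun p _ => this p, timeSplit]
  calc ∑ q : Fin (s+1) → V, pathWeight P x q * avoidInd w q *
          pansum P (q (Fin.last s)) T (avoidInd w)
      ≤ ∑ q : Fin (s+1) → V, pathWeight P x q * avoidInd w q * Lam P w T := by
        apply Finset.sum_le_sum
        intro q _
        apply mul_le_mul_of_nonneg_left
        · rw [← hitGT_eq_pansum]; exact hitGT_le_Lam P w _ T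
        · exact mul_nonneg (pathWeight_nonneg P hP x q) (avoidInd_nonneg w q)
    _ = (∑ q : Fin (s+1) → V, pathWeight P x q * avoidInd w q) * Lam P w T := by
        rw [Finset.sum_mul]
    _ = hitGT P x w s * Lam P w T := by
        rw [hitGT_eq_pansum]; rfl

lemma Lam_submul (P : Matrix V V ℝ) (hP : ∀ a b, 0 ≤ P a b)
    (hrow : ∀ x, ∑ z, P x z = 1) (w : V) (s T : ℕ) :
    Lam P w (s+T) ≤ Lam P w s * Lam P w T := by
  apply Finset.sup'_le
  intro x _
  calc hitGT P x w (s+T) ≤ hitGT P x w s * Lam P w T := hitGT_split_le P hP w x s T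
    _ ≤ Lam P w s * Lam P w T :=
        mul_le_mul_of_nonneg_right (hitGT_le_Lam P w x s) (Lam_nonneg P hP w T)

lemma Lam_pow_le (P : Matrix V V ℝ) (hP : ∀ a b, 0 ≤ P a b)
    (hrow : ∀ x, ∑ z, P x z = 1) (w : V) (L : ℕ) {qq : ℝ} (hq0 : 0 ≤ qq)
    (hL : Lam P w L ≤ qq) : ∀ k, Lam P w (L*k) ≤ qq^k := by
  intro k
  induction k with
  | zero =>
      simpa using Lam_le_one P hP hrow w 0
  | succ k ih =>
      have : L * (k+1) = L * k + L := by ring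
      rw [this, pow_succ]
      calc Lam P w (L*k + L) ≤ Lam P w (L*k) * Lam P w L :=
            Lam_submul P hP hrow w (L*k) L
        _ ≤ qq^k * qq := by
            apply mul_le_mul ih hL (Lam_nonneg P hP w L) (pow_nonneg hq0 k)

lemma hitGT_summable (P : Matrix V V ℝ) (hP : ∀ a b, 0 ≤ P a b)
    (hrow : ∀ x, ∑ z, P x z = 1) (w x : V) (L : ℕ) (hL1 : 1 ≤ L) {qq : ℝ}
    (hq0 : 0 ≤ qq) (hq1 : qq < 1) (hLam : Lam P w L ≤ qq) :
    Summable (fun T => hitGT P x w T) := by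
  apply summable_of_sum_range_le (c := L / (1 - qq))
    (fun T => hitGT_nonneg P hP x w T)
  intro N
  have h1 : ∑ i ∈ Finset.range N, hitGT P x w i ≤ ∑ i ∈ Finset.range N, Lam P w i :=
    Finset.sum_le_sum fun i _ => hitGT_le_Lam P w x i
  have h2 : ∑ i ∈ Finset.range N, Lam P w i ≤ ∑ i ∈ Finset.range (L*N), Lam P w i := by
    apply Finset.sum_le_sum_of_subset_of_nonneg
    · apply Finset.range_subset_range.mpr
      calc N = 1 * N := (one_mul N).symm
        _ ≤ L * N := Nat.mul_le_mul_right N hL1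
    · intro i _ _
      exact Lam_nonneg P hP w i
  have h3 : ∀ M : ℕ, ∑ i ∈ Finset.range (L*M), Lam P w i
      ≤ ∑ k ∈ Finset.range M, (L:ℝ) * qq^k := by
    intro M
    induction M with
    | zero => simp
    | succ M ih =>
        have hLM : L * (M+1) = L * M + L := by ring
        rw [hLM, Finset.sum_range_add, Finset.sum_range_succ]
        apply add_le_add ih
        calc ∑ j ∈ Finset.range L, Lam P w (L*M + j)
            ≤ ∑ _j ∈ Finset.range L, Lam P w (L*M) := by
              apply Finset.sum_le_sum
              intro j _
              exact Lam_antitone P hP hrow w (Nat.le_add_right _ _)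
          _ = (L:ℝ) * Lam P w (L*M) := by
              rw [Finset.sum_const, Finset.card_range, nsmul_eq_mul]
          _ ≤ (L:ℝ) * qq^M := by
              apply mul_le_mul_of_nonneg_left
                (Lam_pow_le P hP hrow w L hq0 hLam M) (by positivity)
    
  have h4 : ∑ k ∈ Finset.range N, (L:ℝ) * qq^k ≤ L / (1 - qq) := by
    rw [← Finset.mul_sum]
    rw [div_eq_mul_inv]
    apply mul_le_mul_of_nonneg_left _ (by positivity)
    have hgeom : ∑ k ∈ Finset.range N, qq^k = (1 - qq^N) / (1 - qq) := by
      rw [geom_sum_eq (ne_of_lt hq1) N]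
      rw [div_eq_div_iff (by nlinarith) (by nlinarith)]
      ring
    rw [hgeom, ← one_div]
    have hnum : 1 - qq^N ≤ 1 := by nlinarith [pow_nonneg hq0 N]
    have hden : (0:ℝ) < 1 - qq := by nlinarith
    exact (div_le_div_iff_of_pos_right hden).mpr hnum
  exact le_trans h1 (le_trans h2 (le_trans (h3 N) h4))

end Aux3
section Aux4
variable {V : Type*} [Fintype V] [DecidableEq V] [Nonempty V]

lemma lazy_nonneg (G : SimpleGraph V) : ∀ a b, 0 ≤ lazySRW G a b := by
  intro a b
  unfold lazySRW
  split
  · norm_num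
  split
  · positivity
  · exact le_refl 0

lemma lazy_diag (G : SimpleGraph V) (x : V) : lazySRW G x x = 1/2 := by
  unfold lazySRW
  rw [if_pos rfl]

lemma lazy_adj (G : SimpleGraph V) {a b : V} (h : G.Adj a b) :
    lazySRW G a b = 1 / (2 * (graphDeg G a : ℝ)) := by
  unfold lazySRW
  rw [if_neg h.ne, if_pos h]

lemma graphDeg_pos (G : SimpleGraph V) {a b : V} (h : G.Adj a b) :
    0 < graphDeg G a := by
  unfold graphDeg
  apply Finset.card_pos.mpr
  exact ⟨b, Finset.mem_filter.mpr ⟨Finset.mem_univ b, h⟩⟩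

lemma graphDeg_le_card (G : SimpleGraph V) (a : V) :
    graphDeg G a ≤ Fintype.card V := by
  unfold graphDeg
  calc (Finset.univ.filter fun y => G.Adj a y).card ≤ Finset.univ.card :=
        Finset.card_le_card (Finset.filter_subset _ _)
    _ = Fintype.card V := Finset.card_univ

lemma exists_neighbor (G : SimpleGraph V) (hconn : G.Connected)
    (hcard : 2 ≤ Fintype.card V) (x : V) : ∃ y, G.Adj x y := by
  obtain ⟨z, hz⟩ := Fintype.exists_ne_of_one_lt_card (by omega) x
  obtain ⟨wk⟩ := hconn.preconnected x z
  have hlen : 0 < wk.length := by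
    rcases Nat.eq_zero_or_pos wk.length with h | h
    · exact absurd (SimpleGraph.Walk.eq_of_length_eq_zero h) (Ne.symm hz)
    · exact h
  exact ⟨wk.getVert 1, by simpa using wk.adj_getVert_succ hlen⟩

lemma lazy_rowsum (G : SimpleGraph V) (hconn : G.Connected)
    (hcard : 2 ≤ Fintype.card V) (x : V) : ∑ y, lazySRW G x y = 1 := by
  obtain ⟨y0, hy0⟩ := exists_neighbor G hconn hcard x
  have hd : 0 < graphDeg G x := graphDeg_pos G hy0
  rw [← Finset.add_sum_erase _ _ (Finset.mem_univ x), lazy_diag]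
  have h1 : ∀ y ∈ Finset.univ.erase x, lazySRW G x y
      = if G.Adj x y then 1 / (2 * (graphDeg G x : ℝ)) else 0 := by
    intro y hy
    have hyx : y ≠ x := (Finset.mem_erase.mp hy).1
    unfold lazySRW
    rw [if_neg (fun h => hyx h.symm)]
  rw [Finset.sum_congr rfl h1, ← Finset.sum_filter]
  have h2 : (Finset.univ.erase x).filter (fun y => G.Adj x y)
      = Finset.univ.filter (fun y => G.Adj x y) := by
    ext y
    simp only [Finset.mem_filter, Finset.mem_erase, Finset.mem_univ, and_true, true_and]
    constructor
    · intro h; exact h.2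
    · intro h; exact ⟨h.ne', h⟩
  rw [h2, Finset.sum_const]
  have h3 : (Finset.univ.filter fun y => G.Adj x y).card = graphDeg G x := rfl
  rw [h3, nsmul_eq_mul]
  have hdne : (graphDeg G x : ℝ) ≠ 0 := by positivity
  field_simp
  ring

lemma lazy_symm (G : SimpleGraph V) (hreg : IsRegularGraph G) (a b : V) :
    lazySRW G a b = lazySRW G b a := by
  obtain ⟨d, hd⟩ := hreg
  unfold lazySRW
  by_cases h : a = b
  · subst h; rfl
  · rw [if_neg h, if_neg (show ¬ b = a from fun hh => h hh.symm)]
    by_cases hadj : G.Adj a b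
    · rw [if_pos hadj, if_pos hadj.symm, hd a, hd b]
    · rw [if_neg hadj, if_neg (show ¬ G.Adj b a from fun hh => hadj hh.symm)]

lemma lazy_colsum (G : SimpleGraph V) (hconn : G.Connected) (hreg : IsRegularGraph G)
    (hcard : 2 ≤ Fintype.card V) (y : V) : ∑ x, lazySRW G x y = 1 := by
  rw [Finset.sum_congr rfl fun x _ => lazy_symm G hreg x y]
  exact lazy_rowsum G hconn hcard y

/-- From any start, the lazy walk hits `w` within `n-1` steps with probability
at least `(1/(2n))^(n-1)`. -/
lemma lazy_hitGT_bound (G : SimpleGraph V) (hconn : G.Connected)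
    (hcard : 2 ≤ Fintype.card V) (x w : V) :
    hitGT (lazySRW G) x w (Fintype.card V - 1)
      ≤ 1 - (1 / (2 * (Fintype.card V : ℝ)))^(Fintype.card V - 1) := by
  set n := Fintype.card V with hn
  have hn2 : 2 ≤ n := hcard
  obtain ⟨wk0⟩ := hconn.preconnected x w
  set W0 := (wk0.toPath : SimpleGraph.Walk G x w) with hW0
  have hlen : W0.length < n := wk0.toPath.2.length_lt
  set L := W0.length with hL
  set p₀ : Fin (n-1+1) → V := fun i => W0.getVert (min (i : ℕ) L) with hp₀
  have hstep : ∀ i : Fin (n-1),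
      1 / (2 * (n:ℝ)) ≤ lazySRW G (p₀ i.castSucc) (p₀ i.succ) := by
    intro i
    have hv1 : ((i.castSucc : Fin (n-1+1)) : ℕ) = (i:ℕ) := rfl
    have hv2 : ((i.succ : Fin (n-1+1)) : ℕ) = (i:ℕ)+1 := rfl
    rcases Nat.lt_or_ge (i : ℕ) L with hc | hc
    · have e1 : min ((i.castSucc : Fin (n-1+1)) : ℕ) L = (i:ℕ) := by
        rw [hv1]; omega
      have e2 : min ((i.succ : Fin (n-1+1)) : ℕ) L = (i:ℕ)+1 := by
        rw [hv2]; omega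
      have hadj : G.Adj (W0.getVert (i:ℕ)) (W0.getVert ((i:ℕ)+1)) :=
        W0.adj_getVert_succ hc
      have : lazySRW G (p₀ i.castSucc) (p₀ i.succ)
          = 1 / (2 * (graphDeg G (W0.getVert (i:ℕ)) : ℝ)) := by
        simp only [hp₀, e1, e2]
        exact lazy_adj G hadj
      rw [this]
      have hdpos : 0 < graphDeg G (W0.getVert (i:ℕ)) := graphDeg_pos G hadj
      have hdle : graphDeg G (W0.getVert (i:ℕ)) ≤ n := graphDeg_le_card G _
      apply div_le_div_of_nonneg_left (by norm_num) (by positivity)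
      have : (graphDeg G (W0.getVert (i:ℕ)) : ℝ) ≤ (n:ℝ) := by exact_mod_cast hdle
      nlinarith
    · have e1 : min ((i.castSucc : Fin (n-1+1)) : ℕ) L = L := by rw [hv1]; omega
      have e2 : min ((i.succ : Fin (n-1+1)) : ℕ) L = L := by rw [hv2]; omega
      have : lazySRW G (p₀ i.castSucc) (p₀ i.succ) = 1/2 := by
        simp only [hp₀, e1, e2]
        exact lazy_diag G _
      rw [this]
      have hnr : (2:ℝ) ≤ (n:ℝ) := by exact_mod_cast hn2
      rw [div_le_div_iff₀ (by positivity) (by norm_num)]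
      nlinarith
  have hw : pathWeight (lazySRW G) x p₀ ≥ (1 / (2 * (n:ℝ)))^(n-1) := by
    unfold pathWeight
    have hstart : p₀ 0 = x := by
      simp only [hp₀]
      have : min ((0 : Fin (n-1+1)) : ℕ) L = 0 := by simp
      rw [this, SimpleGraph.Walk.getVert_zero]
    rw [if_pos hstart, one_mul]
    calc (1 / (2 * (n:ℝ)))^(n-1)
        = ∏ _i : Fin (n-1), (1 / (2 * (n:ℝ))) := by
          rw [Finset.prod_const, Finset.card_univ, Fintype.card_fin]
      _ ≤ ∏ i : Fin (n-1), lazySRW G (p₀ i.castSucc) (p₀ i.succ) := by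
          apply Finset.prod_le_prod
          · intro i _; positivity
          · intro i _; exact hstep i
  have hhit : ¬ (∀ i, p₀ i ≠ w) := by
    push_neg
    refine ⟨⟨L, by omega⟩, ?_⟩
    simp only [hp₀]
    have : min ((⟨L, by omega⟩ : Fin (n-1+1)) : ℕ) L = L := by simp
    rw [this]
    exact SimpleGraph.Walk.getVert_length W0
  -- now bound the avoiding sum
  rw [hitGT_eq_pansum]
  unfold pansum
  have hz : pathWeight (lazySRW G) x p₀ * avoidInd w p₀ = 0 := by
    unfold avoidInd
    rw [if_neg hhit, mul_zero]
  rw [← Finset.sum_erase (f := fun r => pathWeight (lazySRW G) x r * avoidInd w r)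
    Finset.univ hz]
  have hbound : ∑ r ∈ Finset.univ.erase p₀, pathWeight (lazySRW G) x r * avoidInd w r
      ≤ ∑ r ∈ Finset.univ.erase p₀, pathWeight (lazySRW G) x r := by
    apply Finset.sum_le_sum
    intro r _
    calc pathWeight (lazySRW G) x r * avoidInd w r
        ≤ pathWeight (lazySRW G) x r * 1 :=
          mul_le_mul_of_nonneg_left (avoidInd_le_one w r)
            (pathWeight_nonneg _ (lazy_nonneg G) x r)
      _ = pathWeight (lazySRW G) x r := mul_one _
  apply le_trans hbound
  have htot : ∑ r ∈ Finset.univ.erase p₀, pathWeight (lazySRW G) x r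
      = (∑ r : Fin (n-1+1) → V, pathWeight (lazySRW G) x r) - pathWeight (lazySRW G) x p₀ := by
    rw [← Finset.add_sum_erase _ _ (Finset.mem_univ p₀)]
    ring
  rw [htot]
  have htot1 : ∑ r : Fin (n-1+1) → V, pathWeight (lazySRW G) x r = 1 := by
    have := pansum_one (lazySRW G) (lazy_rowsum G hconn hcard) x (n-1)
    unfold pansum at this
    simpa using this
  rw [htot1]
  linarith

end Aux4
section Aux5
variable {V : Type*} [Fintype V] [DecidableEq V] [Nonempty V]

lemma hitGT_self_zero (P : Matrix V V ℝ) (x : V) (T : ℕ) : hitGT P x x T = 0 := by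
  unfold hitGT
  apply Finset.sum_eq_zero
  intro p _
  split
  · unfold pathWeight
    rw [if_neg (by exact fun h => (‹∀ i, p i ≠ x› 0) h), zero_mul]
  · rfl

lemma expHit_self_zero (P : Matrix V V ℝ) (x : V) : expHit P x x = 0 := by
  unfold expHit
  rw [tsum_congr (fun T => hitGT_self_zero P x T)]
  exact tsum_zero

lemma expHit_le_maxHit (P : Matrix V V ℝ) (x y : V) :
    expHit P x y ≤ maxHitTime P := by
  unfold maxHitTime
  have h1 : expHit P x y ≤ ⨆ y' : V, expHit P x y' :=
    le_ciSup (Set.finite_range _).bddAbove y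
  exact le_trans h1 (le_ciSup (f := fun x : V => ⨆ y' : V, expHit P x y')
    (Set.finite_range _).bddAbove x)

lemma maxHit_nonneg (P : Matrix V V ℝ) : 0 ≤ maxHitTime P := by
  obtain ⟨x⟩ := (inferInstance : Nonempty V)
  calc (0:ℝ) = expHit P x x := (expHit_self_zero P x).symm
    _ ≤ maxHitTime P := expHit_le_maxHit P x x

lemma lazy_summable (G : SimpleGraph V) (hconn : G.Connected)
    (hcard : 2 ≤ Fintype.card V) (x w : V) :
    Summable (fun T => hitGT (lazySRW G) x w T) := by
  set n := Fintype.card V with hn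
  have hb : (0:ℝ) < (1 / (2 * (n:ℝ)))^(n-1) := by
    have : (0:ℝ) < (n:ℝ) := by
      have : 2 ≤ n := hcard
      exact_mod_cast (by omega : 0 < n)
    positivity
  have hb1 : (1 / (2 * (n:ℝ)))^(n-1) ≤ 1 := by
    apply pow_le_one₀ (by positivity)
    rw [div_le_one (by positivity)]
    have : (2:ℝ) ≤ (n:ℝ) := by exact_mod_cast hcard
    nlinarith
  apply hitGT_summable (lazySRW G) (lazy_nonneg G) (lazy_rowsum G hconn hcard) w x
    (n-1) (by omega) (qq := 1 - (1 / (2 * (n:ℝ)))^(n-1))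
    (by linarith) (by linarith)
  apply Finset.sup'_le
  intro y _
  exact lazy_hitGT_bound G hconn hcard y w

lemma expHit_nonneg' (P : Matrix V V ℝ) (hP : ∀ a b, 0 ≤ P a b) (x w : V) :
    0 ≤ expHit P x w :=
  tsum_nonneg fun T => hitGT_nonneg P hP x w T

lemma lazy_expHit_rec (G : SimpleGraph V) (hconn : G.Connected)
    (hcard : 2 ≤ Fintype.card V) {x w : V} (hxw : x ≠ w) :
    expHit (lazySRW G) x w = 1 + ∑ z, lazySRW G x z * expHit (lazySRW G) z w := by
  unfold expHit
  rw [Summable.tsum_eq_zero_add (lazy_summable G hconn hcard x w)]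
  rw [hitGT_zero, if_neg hxw]
  congr 1
  have h1 : ∀ T : ℕ, hitGT (lazySRW G) x w (T+1)
      = ∑ z, lazySRW G x z * hitGT (lazySRW G) z w T := by
    intro T
    rw [hitGT_succ, if_neg hxw]
  rw [tsum_congr h1]
  rw [Summable.tsum_finsetSum (fun z _ => ((lazy_summable G hconn hcard z w).mul_left _))]
  apply Finset.sum_congr rfl
  intro z _
  exact tsum_mul_left

lemma lazy_kac (G : SimpleGraph V) (hconn : G.Connected) (hreg : IsRegularGraph G)
    (hcard : 2 ≤ Fintype.card V) (w : V) :
    ∑ z, lazySRW G w z * expHit (lazySRW G) z w = (Fintype.card V : ℝ) - 1 := by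
  set P := lazySRW G with hP
  set g : V → ℝ := fun z => expHit P z w with hg
  have hgw : g w = 0 := expHit_self_zero P w
  have hrec : ∀ x ∈ Finset.univ.erase w, g x = 1 + ∑ z, P x z * g z := by
    intro x hx
    exact lazy_expHit_rec G hconn hcard (Finset.mem_erase.mp hx).1
  have hE1 : ∑ x ∈ Finset.univ.erase w, g x = ∑ x, g x := Finset.sum_erase _ hgw
  have hE2 : ∑ x ∈ Finset.univ.erase w, g x
      = ((Fintype.card V : ℝ) - 1) + (∑ x, ∑ z, P x z * g z - ∑ z, P w z * g z) := by
    rw [Finset.sum_congr rfl hrec, Finset.sum_add_distrib, Finset.sum_const]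
    rw [Finset.card_erase_of_mem (Finset.mem_univ w), Finset.card_univ]
    congr 1
    · rw [nsmul_eq_mul, mul_one]
      have h2 : 1 ≤ Fintype.card V := by omega
      push_cast [Nat.cast_sub h2]
      ring
    · rw [← Finset.add_sum_erase _ (fun x => ∑ z, P x z * g z) (Finset.mem_univ w)]
      ring
  have hE3 : ∑ x, ∑ z, P x z * g z = ∑ x, g x := by
    rw [Finset.sum_comm]
    apply Finset.sum_congr rfl
    intro z _
    rw [← Finset.sum_mul, lazy_colsum G hconn hreg hcard z, one_mul]
  rw [hE1, hE3] at hE2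
  linarith [hE2]

lemma lazy_maxHit_ge (G : SimpleGraph V) (hconn : G.Connected) (hreg : IsRegularGraph G)
    (hcard : 2 ≤ Fintype.card V) :
    2 * ((Fintype.card V : ℝ) - 1) ≤ maxHitTime (lazySRW G) := by
  obtain ⟨w⟩ := (inferInstance : Nonempty V)
  set P := lazySRW G with hP
  have hkac := lazy_kac G hconn hreg hcard w
  have hsplit : ∑ z, P w z * expHit P z w
      = ∑ z ∈ Finset.univ.erase w, P w z * expHit P z w := by
    rw [Finset.sum_erase _ (by rw [expHit_self_zero P w, mul_zero])]
  have hb : ∑ z ∈ Finset.univ.erase w, P w z * expHit P z w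
      ≤ ∑ z ∈ Finset.univ.erase w, P w z * maxHitTime P := by
    apply Finset.sum_le_sum
    intro z _
    exact mul_le_mul_of_nonneg_left (expHit_le_maxHit P z w) (lazy_nonneg G w z)
  have hrow : ∑ z ∈ Finset.univ.erase w, P w z = 1/2 := by
    have h1 := lazy_rowsum G hconn hcard w
    have h2 : P w w + ∑ z ∈ Finset.univ.erase w, P w z = 1 := by
      rw [Finset.add_sum_erase _ _ (Finset.mem_univ w)]
      exact h1
    have h3 : P w w = 1/2 := lazy_diag G w
    linarith
  have : ∑ z ∈ Finset.univ.erase w, P w z * maxHitTime P = (1/2) * maxHitTime P := by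
    rw [← Finset.sum_mul, hrow]
  rw [hsplit] at hkac
  rw [this] at hb
  rw [hkac] at hb
  linarith
end Aux5
section Aux6
variable {V : Type*} [Fintype V] [DecidableEq V] [Nonempty V]

/-- Number of visits to `w` at times `0,…,T-1` (as a real). -/
def visitInd (w : V) {T : ℕ} (r : Fin (T+1) → V) : ℝ :=
  ∑ i : Fin T, if r i.castSucc = w then 1 else 0

lemma visitInd_nonneg (w : V) {T : ℕ} (r : Fin (T+1) → V) : 0 ≤ visitInd w r :=
  Finset.sum_nonneg fun i _ => by split <;> norm_num

lemma visitInd_cons (w y : V) {T : ℕ} (r : Fin (T+1) → V) :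
    visitInd w (Fin.cons y r) = (if y = w then 1 else 0) + visitInd w r := by
  have h0 : Fin.cons (α := fun _ => V) y r ((0 : Fin (T+1)).castSucc) = y := rfl
  have h1 : ∀ i : Fin T, Fin.cons (α := fun _ => V) y r (i.succ.castSucc) = r i.castSucc :=
    fun i => by rw [← Fin.succ_castSucc, Fin.cons_succ]
  unfold visitInd
  rw [Fin.sum_univ_succ]
  simp only [h0, h1]

/-- The exponential moment vector. -/
def chern (P : Matrix V V ℝ) (w : V) (θ : ℝ) (T : ℕ) (y : V) : ℝ :=
  pansum P y T (fun r => Real.exp (-θ * visitInd w r))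

lemma chern_zero (P : Matrix V V ℝ) (w : V) (θ : ℝ) (y : V) :
    chern P w θ 0 y = 1 := by
  unfold chern
  rw [pansum_zero]
  unfold visitInd
  simp

lemma chern_succ (P : Matrix V V ℝ) (w : V) (θ : ℝ) (T : ℕ) (y : V) :
    chern P w θ (T+1) y
      = (if y = w then Real.exp (-θ) else 1) * ∑ z, P y z * chern P w θ T z := by
  unfold chern
  rw [pansum_cons]
  have h1 : ∀ z, pansum P z T (fun r => Real.exp (-θ * visitInd w (Fin.cons y r)))
      = (if y = w then Real.exp (-θ) else 1)
        * pansum P z T (fun r => Real.exp (-θ * visitInd w r)) := by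
    intro z
    rw [← pansum_const_mul]
    apply Finset.sum_congr rfl
    intro r _
    simp only [visitInd_cons]
    by_cases h : y = w
    · rw [if_pos h, if_pos h, ← Real.exp_add]
      congr 2
      ring
    · rw [if_neg h, if_neg h, one_mul, zero_add]
  rw [Finset.sum_congr rfl fun z _ => by rw [h1 z]]
  rw [Finset.mul_sum]
  apply Finset.sum_congr rfl
  intro z _
  ring

lemma lazy_tH_pos (G : SimpleGraph V) (hconn : G.Connected) (hreg : IsRegularGraph G)
    (hcard : 2 ≤ Fintype.card V) : 0 < maxHitTime (lazySRW G) := by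
  have h := lazy_maxHit_ge G hconn hreg hcard
  have : (2:ℝ) ≤ (Fintype.card V : ℝ) := by exact_mod_cast hcard
  linarith

lemma lazy_hfun_le (G : SimpleGraph V) (hconn : G.Connected) (hreg : IsRegularGraph G)
    (hcard : 2 ≤ Fintype.card V) (w : V) {ρ : ℝ}
    (hρ : ρ = 1 / (4 * maxHitTime (lazySRW G))) (z : V) :
    1 ≤ 1 + 2*ρ*expHit (lazySRW G) z w ∧ 1 + 2*ρ*expHit (lazySRW G) z w ≤ 3/2 := by
  have htH := lazy_tH_pos G hconn hreg hcard
  have hρpos : 0 < ρ := by rw [hρ]; positivity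
  have hge : 0 ≤ expHit (lazySRW G) z w := expHit_nonneg' _ (lazy_nonneg G) z w
  have hle : expHit (lazySRW G) z w ≤ maxHitTime (lazySRW G) := expHit_le_maxHit _ z w
  constructor
  · nlinarith
  · have h1 : 2*ρ*expHit (lazySRW G) z w ≤ 2*ρ*maxHitTime (lazySRW G) := by nlinarith
    have h2 : 2*ρ*maxHitTime (lazySRW G) = 1/2 := by
      rw [hρ]
      field_simp
      ring
    linarith

lemma lazy_drift (G : SimpleGraph V) (hconn : G.Connected) (hreg : IsRegularGraph G)
    (hcard : 2 ≤ Fintype.card V) (w : V) {ρ : ℝ}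
    (hρ : ρ = 1 / (4 * maxHitTime (lazySRW G))) (y : V) :
    (if y = w then Real.exp (-(ρ * (2*(Fintype.card V:ℝ)-1))) else 1) *
      (∑ z, lazySRW G y z * (1 + 2*ρ*expHit (lazySRW G) z w))
    ≤ Real.exp (-ρ) * (1 + 2*ρ*expHit (lazySRW G) y w) := by
  have htH := lazy_tH_pos G hconn hreg hcard
  have hρpos : 0 < ρ := by rw [hρ]; positivity
  have hexp_sum : ∑ z, lazySRW G y z * (1 + 2*ρ*expHit (lazySRW G) z w)
      = 1 + 2*ρ*(∑ z, lazySRW G y z * expHit (lazySRW G) z w) := by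
    have h1 : ∀ z, lazySRW G y z * (1 + 2*ρ*expHit (lazySRW G) z w)
        = lazySRW G y z + 2*ρ*(lazySRW G y z * expHit (lazySRW G) z w) := fun z => by ring
    rw [Finset.sum_congr rfl fun z _ => h1 z, Finset.sum_add_distrib,
      lazy_rowsum G hconn hcard y, ← Finset.mul_sum]
  rw [hexp_sum]
  by_cases hy : y = w
  · rw [if_pos hy]
    have hkac : ∑ z, lazySRW G y z * expHit (lazySRW G) z w = (Fintype.card V:ℝ) - 1 := by
      rw [hy]
      exact lazy_kac G hconn hreg hcard w
    rw [hkac, hy, expHit_self_zero]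
    have hN2 : (2:ℝ) ≤ (Fintype.card V:ℝ) := by exact_mod_cast hcard
    have hupos : 0 ≤ 2*ρ*((Fintype.card V:ℝ) - 1) := by nlinarith
    have hθeq : -(ρ * (2*(Fintype.card V:ℝ)-1))
        = -ρ + -(2*ρ*((Fintype.card V:ℝ)-1)) := by ring
    rw [hθeq, Real.exp_add]
    have h1 := Real.add_one_le_exp (2*ρ*((Fintype.card V:ℝ)-1))
    have h2 : Real.exp (-(2*ρ*((Fintype.card V:ℝ)-1)))
        * (1 + 2*ρ*((Fintype.card V:ℝ)-1)) ≤ 1 := by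
      rw [Real.exp_neg, inv_mul_le_iff₀ (Real.exp_pos _)]
      nlinarith
    have h3 : (0:ℝ) < Real.exp (-ρ) := Real.exp_pos _
    calc Real.exp (-ρ) * Real.exp (-(2*ρ*((Fintype.card V:ℝ)-1)))
          * (1 + 2*ρ*((Fintype.card V:ℝ)-1))
        ≤ Real.exp (-ρ) * 1 := by
          rw [mul_assoc]
          exact mul_le_mul_of_nonneg_left h2 (le_of_lt h3)
      _ = Real.exp (-ρ) * (1 + 2*ρ*0) := by ring
  · rw [if_neg hy, one_mul]
    have hrec := lazy_expHit_rec G hconn hcard hy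
    have hsum_g : ∑ z, lazySRW G y z * expHit (lazySRW G) z w
        = expHit (lazySRW G) y w - 1 := by linarith [hrec]
    rw [hsum_g]
    have hbd := lazy_hfun_le G hconn hreg hcard w hρ y
    have h1 : 1 - ρ ≤ Real.exp (-ρ) := by linarith [Real.add_one_le_exp (-ρ)]
    have hX0 : (0:ℝ) ≤ 1 + 2*ρ*expHit (lazySRW G) y w := by linarith [hbd.1]
    have h2 : (1-ρ) * (1 + 2*ρ*expHit (lazySRW G) y w)
        ≤ Real.exp (-ρ) * (1 + 2*ρ*expHit (lazySRW G) y w) :=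
      mul_le_mul_of_nonneg_right h1 hX0
    nlinarith [hbd.2, h2]

lemma lazy_chern_le (G : SimpleGraph V) (hconn : G.Connected) (hreg : IsRegularGraph G)
    (hcard : 2 ≤ Fintype.card V) (w : V) {ρ : ℝ}
    (hρ : ρ = 1 / (4 * maxHitTime (lazySRW G))) :
    ∀ (T : ℕ) (y : V), chern (lazySRW G) w (ρ * (2*(Fintype.card V:ℝ)-1)) T y
      ≤ Real.exp (-(ρ*T)) * (1 + 2*ρ*expHit (lazySRW G) y w) := by
  intro T
  induction T with
  | zero =>
      intro y
      rw [chern_zero]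
      have := (lazy_hfun_le G hconn hreg hcard w hρ y).1
      simpa using this
  | succ T ih =>
      intro y
      push_cast
      rw [chern_succ]
      have hD : 0 ≤ (if y = w then Real.exp (-(ρ * (2*(Fintype.card V:ℝ)-1))) else 1) := by
        split
        · exact le_of_lt (Real.exp_pos _)
        · norm_num
      calc (if y = w then Real.exp (-(ρ * (2*(Fintype.card V:ℝ)-1))) else 1) *
              ∑ z, lazySRW G y z * chern (lazySRW G) w (ρ * (2*(Fintype.card V:ℝ)-1)) T z
          ≤ (if y = w then Real.exp (-(ρ * (2*(Fintype.card V:ℝ)-1))) else 1) *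
              ∑ z, lazySRW G y z * (Real.exp (-(ρ*T)) * (1 + 2*ρ*expHit (lazySRW G) z w)) := by
            apply mul_le_mul_of_nonneg_left _ hD
            apply Finset.sum_le_sum
            intro z _
            exact mul_le_mul_of_nonneg_left (ih z) (lazy_nonneg G y z)
        _ = Real.exp (-(ρ*T)) *
              ((if y = w then Real.exp (-(ρ * (2*(Fintype.card V:ℝ)-1))) else 1) *
                ∑ z, lazySRW G y z * (1 + 2*ρ*expHit (lazySRW G) z w)) := by
            have hsw : ∑ z, lazySRW G y z *
                  (Real.exp (-(ρ*T)) * (1 + 2*ρ*expHit (lazySRW G) z w))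
                = Real.exp (-(ρ*T)) *
                    ∑ z, lazySRW G y z * (1 + 2*ρ*expHit (lazySRW G) z w) := by
              rw [Finset.mul_sum]
              exact Finset.sum_congr rfl fun z _ => by ring
            rw [hsw]
            ring
        _ ≤ Real.exp (-(ρ*T)) * (Real.exp (-ρ) * (1 + 2*ρ*expHit (lazySRW G) y w)) := by
            apply mul_le_mul_of_nonneg_left
              (lazy_drift G hconn hreg hcard w hρ y) (le_of_lt (Real.exp_pos _))
        _ = Real.exp (-(ρ*((T:ℝ)+1))) * (1 + 2*ρ*expHit (lazySRW G) y w) := by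
            rw [← mul_assoc, ← Real.exp_add]
            congr 2
            ring

lemma lazy_Fw_bound (G : SimpleGraph V) (hconn : G.Connected) (hreg : IsRegularGraph G)
    (hcard : 2 ≤ Fintype.card V) (w : V) {ρ : ℝ}
    (hρ : ρ = 1 / (4 * maxHitTime (lazySRW G))) (T : ℕ) (μ : ℝ) (y : V) :
    pansum (lazySRW G) y T (fun r => if visitInd w r ≤ μ then (1:ℝ) else 0)
      ≤ (3/2) * Real.exp (ρ * (2*(Fintype.card V:ℝ)-1) * μ - ρ*T) := by
  set θ : ℝ := ρ * (2*(Fintype.card V:ℝ)-1) with hθ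
  have htH := lazy_tH_pos G hconn hreg hcard
  have hρpos : 0 < ρ := by rw [hρ]; positivity
  have hθpos : 0 ≤ θ := by
    have : (2:ℝ) ≤ (Fintype.card V : ℝ) := by exact_mod_cast hcard
    rw [hθ]; nlinarith
  have hstep1 : pansum (lazySRW G) y T (fun r => if visitInd w r ≤ μ then (1:ℝ) else 0)
      ≤ pansum (lazySRW G) y T (fun r => Real.exp (θ*μ) * Real.exp (-θ * visitInd w r)) := by
    apply pansum_mono _ (lazy_nonneg G)
    intro r
    rw [← Real.exp_add]
    split
    · rename_i hh
      rw [show θ*μ + -θ * visitInd w r = θ*(μ - visitInd w r) by ring]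
      have : 0 ≤ θ*(μ - visitInd w r) := by
        apply mul_nonneg hθpos
        linarith
      calc (1:ℝ) = Real.exp 0 := Real.exp_zero.symm
        _ ≤ Real.exp (θ*(μ - visitInd w r)) := Real.exp_le_exp.mpr this
    · exact le_of_lt (Real.exp_pos _)
  rw [pansum_const_mul] at hstep1
  have hstep2 := lazy_chern_le G hconn hreg hcard w hρ T y
  have hfb := (lazy_hfun_le G hconn hreg hcard w hρ y).2
  have hkey : Real.exp (θ*μ) * Real.exp (-(ρ*T)) = Real.exp (θ * μ - ρ*T) := by
    rw [← Real.exp_add, sub_eq_add_neg]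
  calc pansum (lazySRW G) y T (fun r => if visitInd w r ≤ μ then (1:ℝ) else 0)
      ≤ Real.exp (θ*μ) * chern (lazySRW G) w θ T y := hstep1
    _ ≤ Real.exp (θ*μ) * (Real.exp (-(ρ*T)) * (3/2)) := by
        apply mul_le_mul_of_nonneg_left _ (le_of_lt (Real.exp_pos _))
        calc chern (lazySRW G) w θ T y
            ≤ Real.exp (-(ρ*T)) * (1 + 2*ρ*expHit (lazySRW G) y w) := hstep2
          _ ≤ Real.exp (-(ρ*T)) * (3/2) :=
              mul_le_mul_of_nonneg_left hfb (le_of_lt (Real.exp_pos _))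
    _ = (3/2) * Real.exp (θ * μ - ρ*T) := by
        rw [← hkey]
        ring
end Aux6
section Aux7
variable {V : Type*} [Fintype V] [DecidableEq V] [Nonempty V]

lemma localTime_count {t : ℕ} (p : Fin (t+1) → V) (w : V) :
    2 * (Finset.univ.filter fun i => p i = w).card ≤ localTime p w + 2 := by
  unfold localTime
  by_cases h0 : p 0 = w
  · have h1 : 1 ≤ (Finset.univ.filter fun i => p i = w).card := by
      apply Finset.card_pos.mpr
      exact ⟨0, Finset.mem_filter.mpr ⟨Finset.mem_univ _, h0⟩⟩
    split_ifs <;> omega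
  · split_ifs <;> omega

lemma visitInd_le_count {s T : ℕ} (p : Fin (s+T+1) → V) (w : V) :
    visitInd w (lastPart p)
      ≤ ((Finset.univ.filter fun i => p i = w).card : ℝ) := by
  unfold visitInd
  rw [Finset.sum_boole]
  have hinj : ∀ i ∈ (Finset.univ.filter fun i : Fin T =>
      lastPart (s := s) p i.castSucc = w),
      (⟨s + (i:ℕ), by omega⟩ : Fin (s+T+1)) ∈ Finset.univ.filter fun i => p i = w := by
    intro i hi
    rw [Finset.mem_filter] at hi ⊢
    refine ⟨Finset.mem_univ _, ?_⟩
    have : lastPart (s := s) p i.castSucc = p ⟨s + (i:ℕ), by omega⟩ := by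
      apply congrArg p
      apply Fin.ext
      rfl
    rw [← this]
    exact hi.2
  have hcard : (Finset.univ.filter fun i : Fin T =>
        lastPart (s := s) p i.castSucc = w).card
      ≤ (Finset.univ.filter fun i : Fin (s+T+1) => p i = w).card := by
    apply Finset.card_le_card_of_injOn
      (fun i : Fin T => (⟨s + (i:ℕ), by omega⟩ : Fin (s+T+1))) hinj
    intro a _ b _ hab
    have hv : s + (a:ℕ) = s + (b:ℕ) := by
      have := congrArg Fin.val hab
      simpa using this
    exact Fin.ext (by omega)
  exact_mod_cast hcard

lemma small_localTime_visit {s T : ℕ} (p : Fin (s+T+1) → V) (w : V) (μ : ℝ)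
    (h : (localTime p w : ℝ) ≤ 2*μ - 2) :
    visitInd w (lastPart p) ≤ μ := by
  have h1 := localTime_count p w
  have h2 := visitInd_le_count p w
  have h3 : (2 * (Finset.univ.filter fun i => p i = w).card : ℝ)
      ≤ (localTime p w : ℝ) + 2 := by exact_mod_cast h1
  push_cast at h3
  linarith

lemma cov_iff {s T : ℕ} (hcov3 : ∀ i : ℕ, 3*i ≤ s+T → i ≤ s) (p : Fin (s+T+1) → V) :
    coveredByThird p ↔ (∀ v, ∃ j : Fin (s+1),
      ((j:ℕ):ℝ) ≤ ((s+T:ℕ):ℝ)/3 ∧ firstPart p j = v) := by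
  unfold coveredByThird
  constructor
  · intro h v
    obtain ⟨i, hi1, hi2⟩ := h v
    have h3 : 3*(i:ℕ) ≤ s+T := by
      have h4 : ((3*(i:ℕ) : ℕ):ℝ) ≤ ((s+T:ℕ):ℝ) := by
        push_cast
        push_cast at hi1
        linarith
      exact_mod_cast h4
    have his : (i:ℕ) ≤ s := hcov3 _ h3
    refine ⟨⟨(i:ℕ), by omega⟩, ?_, ?_⟩
    · show (((i:ℕ)):ℝ) ≤ _
      push_cast at hi1 ⊢
      linarith
    · have he : Fin.castLE (by omega : s+1 ≤ s+T+1) (⟨(i:ℕ), by omega⟩ : Fin (s+1)) = i :=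
        Fin.ext rfl
      show p (Fin.castLE _ _) = v
      rw [he]
      exact hi2
  · intro h v
    obtain ⟨j, hj1, hj2⟩ := h v
    refine ⟨Fin.castLE (by omega) j, ?_, hj2⟩
    have : ((Fin.castLE (by omega : s+1 ≤ s+T+1) j : Fin (s+T+1)) : ℕ) = (j:ℕ) := rfl
    push_cast [this]
    push_cast at hj1
    linarith

end Aux7
section Aux7b
variable {V : Type*} [Fintype V] [DecidableEq V] [Nonempty V]

lemma numeric_core (N tH τ T ρ : ℝ)
    (hN : 2 ≤ N) (htH2 : 2*(N-1) ≤ tH) (htHpos : 0 < tH)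
    (hτ : 48*tH ≤ τ) (hT3 : 2*τ - 2 ≤ 3*T)
    (hρ : ρ = 1/(4*tH)) :
    (3/2) * Real.exp (ρ*(2*N-1)*(τ/(4*N)+1) - ρ*T)
      ≤ Real.exp (-(Real.log 2/48)*(τ/tH)) := by
  have hlog2 : Real.log 2 < 0.6931471808 := Real.log_two_lt_d9
  have hlogpos : 0 < Real.log 2 := Real.log_pos (by norm_num)
  have hNpos : (0:ℝ) < N := by linarith
  have htH2' : (2:ℝ) ≤ tH := by linarith
  have hτ0 : 0 ≤ τ := by linarith
  have h1 : (2*N-1)*(τ/(4*N)) ≤ τ/2 := by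
    have he : 2*N*(τ/(4*N)) = τ/2 := by field_simp; ring
    have h0 : 0 ≤ τ/(4*N) := by positivity
    nlinarith
  have hc1 : 0 ≤ (1/6 - Real.log 2/12) * (τ - 48*tH) := by
    apply mul_nonneg _ (by linarith)
    linarith
  have hc2 : tH * Real.log 2 ≤ tH * 0.6931471808 :=
    mul_le_mul_of_nonneg_left hlog2.le htHpos.le
  have h2 : (2*N-1)*(τ/(4*N)+1) - T ≤ -(Real.log 2/12)*τ - 2*tH := by
    have e1 : (2*N-1)*(τ/(4*N)+1) = (2*N-1)*(τ/(4*N)) + 2*N - 1 := by ring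
    rw [e1]
    nlinarith [hc1, hc2]
  have h3 : ρ*((2*N-1)*(τ/(4*N)+1) - T) ≤ ρ*(-(Real.log 2/12)*τ - 2*tH) := by
    apply mul_le_mul_of_nonneg_left h2
    rw [hρ]; positivity
  have h4 : ρ*(-(Real.log 2/12)*τ - 2*tH) = -(Real.log 2/48)*(τ/tH) - 1/2 := by
    rw [hρ]
    field_simp
    ring
  have h5 : ρ*(2*N-1)*(τ/(4*N)+1) - ρ*T ≤ -(Real.log 2/48)*(τ/tH) - 1/2 := by
    have he : ρ*(2*N-1)*(τ/(4*N)+1) - ρ*T = ρ*((2*N-1)*(τ/(4*N)+1) - T) := by ring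
    rw [he]
    linarith [h3, h4.ge, h4.le]
  have h6 : (3:ℝ)/2 ≤ Real.exp (-(Real.log 2/48)*(τ/tH)
      - (ρ*(2*N-1)*(τ/(4*N)+1) - ρ*T)) := by
    have ha := Real.add_one_le_exp (-(Real.log 2/48)*(τ/tH)
      - (ρ*(2*N-1)*(τ/(4*N)+1) - ρ*T))
    have hb : (1:ℝ)/2 ≤ -(Real.log 2/48)*(τ/tH)
        - (ρ*(2*N-1)*(τ/(4*N)+1) - ρ*T) := by linarith
    linarith
  calc (3/2) * Real.exp (ρ*(2*N-1)*(τ/(4*N)+1) - ρ*T)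
      ≤ Real.exp (-(Real.log 2/48)*(τ/tH) - (ρ*(2*N-1)*(τ/(4*N)+1) - ρ*T))
          * Real.exp (ρ*(2*N-1)*(τ/(4*N)+1) - ρ*T) :=
        mul_le_mul_of_nonneg_right h6 (le_of_lt (Real.exp_pos _))
    _ = Real.exp (-(Real.log 2/48)*(τ/tH)) := by
        rw [← Real.exp_add]
        congr 1
        ring

end Aux7b
section Aux8
variable {V : Type*} [Fintype V] [DecidableEq V] [Nonempty V]

/-- Indicator that the first part covers within `(s+T)/3`. -/
def covAInd (s T : ℕ) (q : Fin (s+1) → V) : ℝ :=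
  if (∀ v, ∃ j : Fin (s+1), ((j:ℕ):ℝ) ≤ ((s+T:ℕ):ℝ)/3 ∧ q j = v) then 1 else 0

/-- Indicator of few visits. -/
def visitBInd (w : V) (μ : ℝ) {T : ℕ} (r : Fin (T+1) → V) : ℝ :=
  if visitInd w r ≤ μ then 1 else 0

lemma covAInd_nonneg (s T : ℕ) (q : Fin (s+1) → V) : 0 ≤ covAInd (V := V) s T q := by
  unfold covAInd; split <;> norm_num

lemma covAInd_le_one (s T : ℕ) (q : Fin (s+1) → V) : covAInd (V := V) s T q ≤ 1 := by
  unfold covAInd; split <;> norm_num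

lemma visitBInd_nonneg (w : V) (μ : ℝ) {T : ℕ} (r : Fin (T+1) → V) :
    0 ≤ visitBInd w μ r := by
  unfold visitBInd; split <;> norm_num

lemma card_two_of_big (G : SimpleGraph V) {τ' : ℝ}
    (hbig : (Fintype.card V : ℝ) *
      Real.exp (-(Real.log 2 / 48) * (τ' / maxHitTime (lazySRW G))) < 1) :
    2 ≤ Fintype.card V := by
  by_contra hlt
  have hpos : 0 < Fintype.card V := Fintype.card_pos
  have h1 : Fintype.card V = 1 := by omega
  have hsub : ∀ a b : V, a = b := by
    have := Fintype.card_le_one_iff.mp (le_of_eq h1)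
    intro a b; exact this a b
  have htH : maxHitTime (lazySRW G) = 0 := by
    have h2 : ∀ a : V, (⨆ y : V, expHit (lazySRW G) a y) = 0 := by
      intro a
      have he : (fun y : V => expHit (lazySRW G) a y) = fun _ => (0:ℝ) :=
        funext fun y => by rw [hsub a y]; exact expHit_self_zero _ y
      rw [he, ciSup_const]
    unfold maxHitTime
    have he2 : (fun a : V => ⨆ y : V, expHit (lazySRW G) a y) = fun _ => (0:ℝ) :=
      funext h2
    rw [he2, ciSup_const]
  rw [htH, div_zero, mul_zero, Real.exp_zero, mul_one, h1] at hbig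
  norm_num at hbig

lemma main_nontrivial (G : SimpleGraph V) (hconn : G.Connected) (hreg : IsRegularGraph G)
    (x : V) (s T : ℕ)
    (hcov3 : ∀ i : ℕ, 3*i ≤ s+T → i ≤ s) (h3s : 3*s ≤ s+T+2)
    (hbig : (Fintype.card V : ℝ) *
      Real.exp (-(Real.log 2 / 48) * (((s+T : ℕ) : ℝ) / maxHitTime (lazySRW G))) < 1) :
    (∑ p : Fin ((s+T)+1) → V,
        if (∃ w : V, (localTime p w : ℝ) ≤ ((s+T : ℕ) : ℝ) / (2 * (Fintype.card V : ℝ)))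
            ∧ coveredByThird p then
          pathWeight (lazySRW G) x p
        else 0)
      ≤ (Fintype.card V : ℝ) *
          Real.exp (-(Real.log 2 / 48) * (((s+T : ℕ) : ℝ) / maxHitTime (lazySRW G))) *
        (∑ p : Fin ((s+T)+1) → V,
          if coveredByThird p then pathWeight (lazySRW G) x p else 0) := by
  have hn2 : 2 ≤ Fintype.card V := card_two_of_big G hbig
  have hN2 : (2:ℝ) ≤ (Fintype.card V : ℝ) := by exact_mod_cast hn2
  have htHpos : 0 < maxHitTime (lazySRW G) := lazy_tH_pos G hconn hreg hn2
  have htH2 : 2*((Fintype.card V : ℝ) - 1) ≤ maxHitTime (lazySRW G) :=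
    lazy_maxHit_ge G hconn hreg hn2
  have hτ0 : (0:ℝ) ≤ ((s+T : ℕ) : ℝ) := by positivity
  have hlogpos : 0 < Real.log 2 := Real.log_pos (by norm_num)
  have hEhalf : Real.exp (-(Real.log 2 / 48) * (((s+T : ℕ) : ℝ) / maxHitTime (lazySRW G)))
      < 1/2 := by
    nlinarith [hbig,
      Real.exp_pos (-(Real.log 2 / 48) * (((s+T : ℕ) : ℝ) / maxHitTime (lazySRW G)))]
  have hτ48 : 48 * maxHitTime (lazySRW G) ≤ ((s+T : ℕ) : ℝ) := by
    have h1 : Real.exp (-(Real.log 2 / 48) * (((s+T : ℕ) : ℝ) / maxHitTime (lazySRW G)))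
        < Real.exp (Real.log (1/2)) := by
      rw [Real.exp_log (by norm_num)]
      exact hEhalf
    have h2 := Real.exp_lt_exp.mp h1
    have h3 : Real.log (1/2) = -Real.log 2 := by
      rw [show (1:ℝ)/2 = 2⁻¹ by norm_num, Real.log_inv]
    rw [h3] at h2
    have h5 : 48 < ((s+T : ℕ) : ℝ) / maxHitTime (lazySRW G) := by
      by_contra hc
      push_neg at hc
      have : Real.log 2 / 48 * (((s+T : ℕ) : ℝ) / maxHitTime (lazySRW G))
          ≤ Real.log 2 / 48 * 48 := by
        apply mul_le_mul_of_nonneg_left hc (by positivity)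
      nlinarith
    calc 48 * maxHitTime (lazySRW G)
        ≤ (((s+T : ℕ) : ℝ) / maxHitTime (lazySRW G)) * maxHitTime (lazySRW G) := by
          nlinarith
      _ = ((s+T : ℕ) : ℝ) := by field_simp
  -- uniform bound on the few-visits probability
  have hFw : ∀ (w y : V),
      pansum (lazySRW G) y T
          (visitBInd w (((s+T : ℕ) : ℝ)/(4*(Fintype.card V : ℝ)) + 1))
        ≤ Real.exp (-(Real.log 2 / 48) * (((s+T : ℕ) : ℝ) / maxHitTime (lazySRW G))) := by
    intro w y
    have hb := lazy_Fw_bound G hconn hreg hn2 w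
      (rfl : (1/(4 * maxHitTime (lazySRW G)) : ℝ) = 1/(4 * maxHitTime (lazySRW G))) T
      (((s+T : ℕ) : ℝ)/(4*(Fintype.card V : ℝ)) + 1) y
    have hnum := numeric_core (Fintype.card V : ℝ) (maxHitTime (lazySRW G))
      ((s+T : ℕ) : ℝ) (T:ℝ) (1/(4 * maxHitTime (lazySRW G))) hN2 htH2 htHpos hτ48 ?_ rfl
    · exact le_trans hb hnum
    · have h3T : 2*(s+T) ≤ 3*T + 2 := by omega
      have hc : ((2*(s+T) : ℕ) : ℝ) ≤ ((3*T + 2 : ℕ) : ℝ) := by exact_mod_cast h3T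
      push_cast at hc
      push_cast
      linarith
  -- right-hand side identity
  have hRHS : (∑ p : Fin ((s+T)+1) → V,
        if coveredByThird p then pathWeight (lazySRW G) x p else 0)
      = ∑ q : Fin (s+1) → V, pathWeight (lazySRW G) x q * covAInd s T q := by
    have hstep : ∀ p : Fin ((s+T)+1) → V,
        (if coveredByThird p then pathWeight (lazySRW G) x p else 0)
          = pathWeight (lazySRW G) x p
              * (covAInd s T (firstPart p) * (fun _ => (1:ℝ)) (lastPart p)) := by
      intro p
      unfold covAInd
      by_cases hc : coveredByThird p
      · rw [if_pos hc, if_pos ((cov_iff hcov3 p).mp hc)]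
        ring
      · rw [if_neg hc, if_neg (fun hcc => hc ((cov_iff hcov3 p).mpr hcc))]
        ring
    rw [Finset.sum_congr rfl fun p _ => hstep p,
      timeSplit (lazySRW G) s T x (covAInd s T) (fun _ => (1:ℝ))]
    apply Finset.sum_congr rfl
    intro q _
    rw [pansum_one (lazySRW G) (lazy_rowsum G hconn hn2) _ T, mul_one]
  -- left-hand side bound
  have hLHS : (∑ p : Fin ((s+T)+1) → V,
        if (∃ w : V, (localTime p w : ℝ) ≤ ((s+T : ℕ) : ℝ) / (2 * (Fintype.card V : ℝ)))
            ∧ coveredByThird p then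
          pathWeight (lazySRW G) x p
        else 0)
      ≤ ∑ w : V, ∑ p : Fin ((s+T)+1) → V,
          pathWeight (lazySRW G) x p * (covAInd s T (firstPart p)
            * visitBInd w (((s+T : ℕ) : ℝ)/(4*(Fintype.card V : ℝ)) + 1) (lastPart p)) := by
    rw [Finset.sum_comm]
    apply Finset.sum_le_sum
    intro p _
    have hwnn : ∀ w ∈ Finset.univ, (0:ℝ) ≤ pathWeight (lazySRW G) x p
        * (covAInd s T (firstPart p)
            * visitBInd w (((s+T : ℕ) : ℝ)/(4*(Fintype.card V : ℝ)) + 1) (lastPart p)) := by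
      intro w _
      apply mul_nonneg (pathWeight_nonneg _ (lazy_nonneg G) x p)
      exact mul_nonneg (covAInd_nonneg s T _) (visitBInd_nonneg w _ _)
    split
    · rename_i hcond
      obtain ⟨⟨w₀, hw₀⟩, hcov⟩ := hcond
      have hAval : covAInd s T (firstPart p) = 1 := by
        unfold covAInd
        rw [if_pos ((cov_iff hcov3 p).mp hcov)]
      have hBval : visitBInd w₀ (((s+T : ℕ) : ℝ)/(4*(Fintype.card V : ℝ)) + 1)
          (lastPart p) = 1 := by
        unfold visitBInd
        rw [if_pos]
        apply small_localTime_visit p w₀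
        have hNne : (Fintype.card V : ℝ) ≠ 0 := by positivity
        have he : 2*(((s+T : ℕ) : ℝ)/(4*(Fintype.card V : ℝ)) + 1) - 2
            = ((s+T : ℕ) : ℝ) / (2*(Fintype.card V:ℝ)) := by
          field_simp
          ring
        rw [he]
        exact hw₀
      calc pathWeight (lazySRW G) x p
          = pathWeight (lazySRW G) x p * (covAInd s T (firstPart p)
              * visitBInd w₀ (((s+T : ℕ) : ℝ)/(4*(Fintype.card V : ℝ)) + 1) (lastPart p)) := by
            rw [hAval, hBval]; ring
        _ ≤ ∑ w : V, pathWeight (lazySRW G) x p * (covAInd s T (firstPart p)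
              * visitBInd w (((s+T : ℕ) : ℝ)/(4*(Fintype.card V : ℝ)) + 1) (lastPart p)) :=
            Finset.single_le_sum hwnn (Finset.mem_univ w₀)
    · exact Finset.sum_nonneg hwnn
  -- per-w bound
  have hperw : ∀ w : V, (∑ p : Fin ((s+T)+1) → V,
          pathWeight (lazySRW G) x p * (covAInd s T (firstPart p)
            * visitBInd w (((s+T : ℕ) : ℝ)/(4*(Fintype.card V : ℝ)) + 1) (lastPart p)))
      ≤ Real.exp (-(Real.log 2 / 48) * (((s+T : ℕ) : ℝ) / maxHitTime (lazySRW G)))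
          * ∑ q : Fin (s+1) → V, pathWeight (lazySRW G) x q * covAInd s T q := by
    intro w
    rw [timeSplit (lazySRW G) s T x (covAInd s T)
      (visitBInd w (((s+T : ℕ) : ℝ)/(4*(Fintype.card V : ℝ)) + 1))]
    calc ∑ q : Fin (s+1) → V, pathWeight (lazySRW G) x q * covAInd s T q
            * pansum (lazySRW G) (q (Fin.last s)) T
                (visitBInd w (((s+T : ℕ) : ℝ)/(4*(Fintype.card V : ℝ)) + 1))
        ≤ ∑ q : Fin (s+1) → V, pathWeight (lazySRW G) x q * covAInd s T q
            * Real.exp (-(Real.log 2 / 48) * (((s+T : ℕ) : ℝ) / maxHitTime (lazySRW G))) := by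
          apply Finset.sum_le_sum
          intro q _
          exact mul_le_mul_of_nonneg_left (hFw w (q (Fin.last s)))
            (mul_nonneg (pathWeight_nonneg _ (lazy_nonneg G) x q) (covAInd_nonneg s T q))
      _ = Real.exp (-(Real.log 2 / 48) * (((s+T : ℕ) : ℝ) / maxHitTime (lazySRW G)))
            * ∑ q : Fin (s+1) → V, pathWeight (lazySRW G) x q * covAInd s T q := by
          rw [Finset.mul_sum]
          exact Finset.sum_congr rfl fun q _ => by ring
  -- combine everything
  calc (∑ p : Fin ((s+T)+1) → V,
        if (∃ w : V, (localTime p w : ℝ) ≤ ((s+T : ℕ) : ℝ) / (2 * (Fintype.card V : ℝ)))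
            ∧ coveredByThird p then
          pathWeight (lazySRW G) x p
        else 0)
      ≤ ∑ w : V, ∑ p : Fin ((s+T)+1) → V,
          pathWeight (lazySRW G) x p * (covAInd s T (firstPart p)
            * visitBInd w (((s+T : ℕ) : ℝ)/(4*(Fintype.card V : ℝ)) + 1) (lastPart p)) := hLHS
    _ ≤ ∑ _w : V, Real.exp (-(Real.log 2 / 48) * (((s+T : ℕ) : ℝ) / maxHitTime (lazySRW G)))
          * ∑ q : Fin (s+1) → V, pathWeight (lazySRW G) x q * covAInd s T q :=
        Finset.sum_le_sum fun w _ => hperw w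
    _ = (Fintype.card V : ℝ) *
          Real.exp (-(Real.log 2 / 48) * (((s+T : ℕ) : ℝ) / maxHitTime (lazySRW G)))
          * ∑ q : Fin (s+1) → V, pathWeight (lazySRW G) x q * covAInd s T q := by
        rw [Finset.sum_const, Finset.card_univ, nsmul_eq_mul]
        ring
    _ = (Fintype.card V : ℝ) *
          Real.exp (-(Real.log 2 / 48) * (((s+T : ℕ) : ℝ) / maxHitTime (lazySRW G)))
          * (∑ p : Fin ((s+T)+1) → V,
              if coveredByThird p then pathWeight (lazySRW G) x p else 0) := by
        rw [hRHS]

end Aux8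

/-- Conditionally on covering by time `t/3`, the probability that
some vertex has local time at most `t/(2|G|)` is at most
`|G| exp(-(log 2/48) t/t_hit(G))` (stated in joint form:
`P[A ∩ B] ≤ bound ⋅ P[B]` for the conditioning event `B = {τ_cov ≤ t/3}`). -/
theorem small_local_time_given_covered {V : Type*} [Fintype V] [DecidableEq V] [Nonempty V]
    (G : SimpleGraph V) (hconn : G.Connected) (hreg : IsRegularGraph G) :
    ∀ (x : V) (t : ℕ),
      (∑ p : Fin (t+1) → V,
          if (∃ w : V, (localTime p w : ℝ) ≤ (t : ℝ) / (2 * (Fintype.card V : ℝ)))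
              ∧ coveredByThird p then
            pathWeight (lazySRW G) x p
          else 0)
        ≤ (Fintype.card V : ℝ) *
            Real.exp (-(Real.log 2 / 48) * ((t : ℝ) / maxHitTime (lazySRW G))) *
          (∑ p : Fin (t+1) → V,
            if coveredByThird p then pathWeight (lazySRW G) x p else 0) := by
  intro x t
  by_cases htriv : 1 ≤ (Fintype.card V : ℝ) *
      Real.exp (-(Real.log 2 / 48) * ((t:ℝ) / maxHitTime (lazySRW G)))
  · have hmono : (∑ p : Fin (t+1) → V,
          if (∃ w : V, (localTime p w : ℝ) ≤ (t : ℝ) / (2 * (Fintype.card V : ℝ)))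
              ∧ coveredByThird p then
            pathWeight (lazySRW G) x p
          else 0)
        ≤ ∑ p : Fin (t+1) → V,
            if coveredByThird p then pathWeight (lazySRW G) x p else 0 := by
      apply Finset.sum_le_sum
      intro p _
      by_cases hc : (∃ w : V, (localTime p w : ℝ) ≤ (t : ℝ) / (2 * (Fintype.card V : ℝ)))
          ∧ coveredByThird p
      · rw [if_pos hc, if_pos hc.2]
      · rw [if_neg hc]
        split
        · exact pathWeight_nonneg _ (lazy_nonneg G) x p
        · exact le_refl 0
    have hpos : (0:ℝ) ≤ ∑ p : Fin (t+1) → V,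
        if coveredByThird p then pathWeight (lazySRW G) x p else 0 := by
      apply Finset.sum_nonneg
      intro p _
      split
      · exact pathWeight_nonneg _ (lazy_nonneg G) x p
      · exact le_refl 0
    calc (∑ p : Fin (t+1) → V,
          if (∃ w : V, (localTime p w : ℝ) ≤ (t : ℝ) / (2 * (Fintype.card V : ℝ)))
              ∧ coveredByThird p then
            pathWeight (lazySRW G) x p
          else 0)
        ≤ ∑ p : Fin (t+1) → V,
            if coveredByThird p then pathWeight (lazySRW G) x p else 0 := hmono
      _ ≤ (Fintype.card V : ℝ) *
            Real.exp (-(Real.log 2 / 48) * ((t : ℝ) / maxHitTime (lazySRW G))) *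
          (∑ p : Fin (t+1) → V,
            if coveredByThird p then pathWeight (lazySRW G) x p else 0) :=
        le_mul_of_one_le_left hpos htriv
  · push_neg at htriv
    obtain ⟨s, T, rfl, hcov3, h3s⟩ : ∃ s T : ℕ, t = s + T
        ∧ (∀ i : ℕ, 3*i ≤ s+T → i ≤ s) ∧ 3*s ≤ s+T+2 := by
      refine ⟨(t+2)/3, t - (t+2)/3, by omega, ?_, by omega⟩
      intro i h
      omega
    exact main_nontrivial G hconn hreg x s T hcov3 h3s htriv
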